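/- arXiv:1705.07623 — 3 statements merged into one kernel-verified Lean document; each statement's English description precedes it below -/
import Mathlib

section
/- Let q be a prime power with q ≡ 7 or 13 (mod 24), set M = 3 and N = (q²+q+1)/3, and let I_1 be the set of indices i ∈ Z_N with ψ_{F_{q³}}(C_i^{(N,q³)}) = −3+2q. Then X_1 is purely a subset of Z_{2N}; that is, reduction modulo 2N is injective on {x ∈ X_Q : x mod N ∈ 2^{-1}I_1}. -/
open scoped Classical Pointwise

/-- The canonical additive character of a finite field `F` of characteristic `p`:
`ψ(x) = exp(2πi·Tr_{F/F_p}(x)/p)`. -/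
noncomputable def canonPsi (p : ℕ) (F : Type) [Field F] [Algebra (ZMod p) F] : F → ℂ :=
  fun x => Complex.exp (2 * Real.pi * Complex.I *
    ((Algebra.trace (ZMod p) F x).val : ℂ) / (p : ℂ))

/-- The cyclotomic class `C_i^{(N,Q)} = ω^i · ⟨ω^N⟩`. -/
def cycClass {F : Type} [Field F] (ω : F) (N i : ℕ) : Set F :=
  {x | ∃ k : ℕ, x = ω ^ i * (ω ^ N) ^ k}

/-- `ψ(D) = Σ_{x ∈ D} ψ(x)` for a subset `D` of a finite field. -/
noncomputable def psiSum {F : Type} [Field F] [Fintype F] (ψ : F → ℂ) (S : Set F) : ℂ :=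
  ∑ x ∈ S.toFinset, ψ x

/-- `W_Q := {i mod q²+q+1 : Tr_{q³/q}(ω^{2i}) = 0}`. -/
def WQ (q : ℕ) (K : Type) {F : Type} [Field K] [Field F] [Algebra K F] (ω : F) :
    Set (ZMod (q ^ 2 + q + 1)) :=
  {i | Algebra.trace K F (ω ^ (2 * i.val)) = 0}

/-- `𝒳_Q := {ω^{d}·Tr_{q³/q}(ω^{d₀+d}) : d ∈ W_Q, d ≠ d₀} ∪ {2ω^{d₀}}`. -/
noncomputable def scrXQ (q : ℕ) (K : Type) {F : Type} [Field K] [Field F] [Algebra K F]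
    (ω : F) (d₀ : ZMod (q ^ 2 + q + 1)) : Set F :=
  {x | ∃ d ∈ WQ q K ω, d ≠ d₀ ∧
    x = ω ^ d.val * algebraMap K F (Algebra.trace K F (ω ^ (d₀.val + d.val)))} ∪
  {2 * ω ^ d₀.val}

/-- `X_Q := {log_ω(x) mod 2(q²+q+1) : x ∈ 𝒳_Q}`. -/
noncomputable def XQ (q : ℕ) (K : Type) {F : Type} [Field K] [Field F] [Algebra K F]
    (ω : F) (d₀ : ZMod (q ^ 2 + q + 1)) : Set (ZMod (2 * (q ^ 2 + q + 1))) :=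
  {y | ∃ x ∈ scrXQ q K ω d₀, ∃ k : ℕ, x = ω ^ k ∧ y = (k : ZMod (2 * (q ^ 2 + q + 1)))}

/- ------------------------------------------------------------------ -/
/- Auxiliary lemmas for the proof of Statement 14.                      -/
/- ------------------------------------------------------------------ -/

private lemma st14_mod24 {p nn q : ℕ} (hp : Nat.Prime p) (hq : q = p ^ nn) (hn : 0 < nn)
    (hq24 : q % 24 = 7 ∨ q % 24 = 13) : (p % 24 = 7 ∨ p % 24 = 13) ∧ nn % 2 = 1 := by
  have hpd : p ∣ q := hq ▸ dvd_pow_self p hn.ne'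
  have hq2 : q % 2 = 1 := by rcases hq24 with h | h <;> omega
  have hq3 : q % 3 = 1 := by rcases hq24 with h | h <;> omega
  have hp2 : p ≠ 2 := by rintro rfl; obtain ⟨c, rfl⟩ := hpd; omega
  have hp3 : p ≠ 3 := by rintro rfl; obtain ⟨c, rfl⟩ := hpd; omega
  have hpo : p % 2 = 1 := Nat.odd_iff.mp (hp.odd_of_ne_two hp2)
  have hp3' : p % 3 ≠ 0 := by
    intro h
    exact hp3 ((Nat.prime_dvd_prime_iff_eq (by norm_num) hp).mp (Nat.dvd_of_mod_eq_zero h)).symm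
  have key : ∀ r, r < 24 → r % 2 = 1 → r % 3 ≠ 0 → r ^ 2 % 24 = 1 := by decide
  have hp24 : p ^ 2 % 24 = 1 := by
    have h1 : p ^ 2 % 24 = (p % 24) ^ 2 % 24 := by rw [Nat.pow_mod]
    rw [h1]
    exact key (p % 24) (Nat.mod_lt _ (by norm_num)) (by omega) (by omega)
  have hsq : ∀ c : ℕ, (p ^ 2) ^ c % 24 = 1 := by
    intro c
    have h := Nat.pow_mod (p ^ 2) c 24
    rw [hp24, one_pow] at h
    omega
  have hnodd : nn % 2 = 1 := by
    rcases Nat.even_or_odd nn with he | ho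
    · obtain ⟨c, rfl⟩ := he
      have h1 : q % 24 = 1 := by
        rw [hq, show c + c = 2 * c by ring, show p ^ (2 * c) = (p ^ 2) ^ c by
          rw [← pow_mul]]
        exact hsq c
      omega
    · exact Nat.odd_iff.mp ho
  have hqp : q % 24 = p % 24 := by
    obtain ⟨c, hc⟩ : ∃ c, nn = 2 * c + 1 := ⟨nn / 2, by omega⟩
    have h1 : q = (p ^ 2) ^ c * p := by rw [hq, hc, pow_succ, ← pow_mul]
    rw [h1, Nat.mul_mod, hsq c]
    omega
  exact ⟨by omega, hnodd⟩

private lemma st14_geom {p : ℕ} (hp : p % 2 = 1) (k : ℕ) :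
    ∃ s, (p - 1) * s = p ^ k - 1 ∧ s % 2 = k % 2 := by
  induction k with
  | zero => exact ⟨0, by simp⟩
  | succ k ih =>
    obtain ⟨s, h1, h2⟩ := ih
    have hpk : 0 < p ^ k := pow_pos (by omega) k
    have hle : p ^ k ≤ p ^ (k + 1) := Nat.pow_le_pow_right (by omega) (by omega)
    have hmul : (p - 1) * p ^ k + p ^ k = p ^ (k + 1) := by
      have h3 : p ^ (k + 1) = p * p ^ k := by rw [pow_succ]; ring
      have h4 : (p - 1) * p ^ k + p ^ k = ((p - 1) + 1) * p ^ k := by ring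
      rw [h4, h3]
      congr 1
      omega
    have hpkodd : p ^ k % 2 = 1 := by
      have h := Nat.pow_mod p k 2
      rw [hp, one_pow] at h
      omega
    refine ⟨s + p ^ k, ?_, by omega⟩
    rw [Nat.mul_add, h1]
    omega

private lemma st14_nonsq {p nn q : ℕ} [Fact p.Prime] (hq : q = p ^ nn) (hn : 0 < nn)
    (hq24 : q % 24 = 7 ∨ q % 24 = 13) (F : Type) [Field F] [Fintype F]
    (hF : Fintype.card F = q ^ 3) (v : ℤ) (hv : v = -2 ∨ v = 6) :
    ¬ IsSquare ((v : F)) := by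
  have hp := (Fact.out : p.Prime)
  obtain ⟨hp24, hnodd⟩ := st14_mod24 hp hq hn hq24
  have hp7 : 7 ≤ p := by rcases hp24 with h | h <;> omega
  have hpo : p % 2 = 1 := by rcases hp24 with h | h <;> omega
  -- identify the characteristic of F with p
  obtain ⟨p', hp'⟩ := CharP.exists F
  haveI := hp'
  have hp'p : p'.Prime := CharP.char_is_prime F p'
  obtain ⟨k, -, hk⟩ := FiniteField.card F p'
  have hpp' : p' = p := by
    have h1 : p' ∣ q ^ 3 := by
      rw [← hF, hk]
      exact dvd_pow_self p' k.pos.ne'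
    have h2 : p' ∣ p := by
      rw [hq, ← pow_mul] at h1
      exact hp'p.dvd_of_dvd_pow h1
    exact (Nat.prime_dvd_prime_iff_eq hp'p hp).mp h2
  haveI hCh : CharP F p := by rwa [hpp'] at hp'
  -- the element in ZMod p is not zero
  have hw0 : ((v : ZMod p)) ≠ 0 := by
    rw [Ne, ZMod.intCast_zmod_eq_zero_iff_dvd]
    intro h
    have h2 : (p : ℤ) ∣ 6 := by
      rcases hv with rfl | rfl
      · have h3 : (p : ℤ) ∣ 2 := (dvd_neg).mp h
        exact dvd_trans h3 (by norm_num)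
      · exact h
    have h3 : (p : ℤ) ≤ 6 := Int.le_of_dvd (by norm_num) h2
    have : p ≤ 6 := by exact_mod_cast h3
    omega
  -- the element in ZMod p is not a square
  have hns : ¬ IsSquare ((v : ZMod p)) := by
    rcases hv with rfl | rfl
    · have hco : ((((-2 : ℤ)) : ZMod p)) = (-2 : ZMod p) := by push_cast; ring
      rw [hco, ZMod.exists_sq_eq_neg_two_iff (by omega : p ≠ 2)]
      rcases hp24 with h | h
      · have : p % 8 = 7 := by omega
        omega
      · have : p % 8 = 5 := by omega
        omega
    · haveI : Fact (Nat.Prime 3) := ⟨by norm_num⟩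
      have h2 : legendreSym p 2 = ZMod.χ₈ (p : ZMod 8) := legendreSym.at_two (by omega)
      have hχval : (ZMod.χ₈ ((p : ℕ) : ZMod 8) : ℤ) =
          (if p % 8 = 1 ∨ p % 8 = 7 then 1 else -1) := by
        rw [ZMod.χ₈_nat_eq_if_mod_eight, if_neg (by omega : ¬ p % 2 = 0)]
      have h3p : legendreSym 3 (p : ℤ) = 1 := by
        rw [legendreSym.mod]
        have h1 : p % 3 = 1 := by rcases hp24 with h | h <;> omega
        have hmod : ((p : ℤ) % ((3:ℕ) : ℤ)) = 1 := by push_cast; omega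
        rw [hmod]
        exact legendreSym.at_one 3
      have hrec := legendreSym.quadratic_reciprocity (p := 3) (q := p)
        (by norm_num) (by omega) (by omega)
      rw [h3p, mul_one] at hrec
      simp only [Nat.cast_ofNat] at hrec
      -- hrec : legendreSym p 3 = (-1) ^ (3 / 2 * (p / 2))
      have h6 : legendreSym p 6 = -1 := by
        rw [show (6 : ℤ) = 2 * 3 by norm_num, legendreSym.mul, h2, hrec, hχval]
        rcases hp24 with h | h
        · rw [if_pos (by omega : p % 8 = 1 ∨ p % 8 = 7)]
          have hodd : Odd (3 / 2 * (p / 2)) := by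
            rw [Nat.odd_iff]
            omega
          rw [hodd.neg_one_pow]
          norm_num
        · rw [if_neg (by omega : ¬ (p % 8 = 1 ∨ p % 8 = 7))]
          have heven : Even (3 / 2 * (p / 2)) := by
            rw [Nat.even_iff]
            omega
          rw [heven.neg_one_pow]
          norm_num
      exact (legendreSym.eq_neg_one_iff p (a := (6:ℤ))).mp h6
  -- Euler criterion in ZMod p
  have hEu : ((v : ZMod p)) ^ (p / 2) = -1 := by
    rcases ZMod.pow_div_two_eq_neg_one_or_one p hw0 with h | h
    · exact absurd ((ZMod.euler_criterion p hw0).mpr h) hns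
    · exact h
  -- now lift to F
  intro hsq
  obtain ⟨c, hc⟩ := hsq
  have hvF : ((v : F)) = (ZMod.castHom (dvd_refl p) F) ((v : ZMod p)) := by
    rw [map_intCast]
  have hwF0 : ((v : F)) ≠ 0 := by
    rw [hvF]
    intro h
    exact hw0 ((ZMod.castHom (dvd_refl p) F).injective (by rw [h, map_zero]))
  have hc0 : c ≠ 0 := by
    intro h
    rw [h, mul_zero] at hc
    exact hwF0 hc
  obtain ⟨s, hs, hs2⟩ := st14_geom hpo (3 * nn)
  have hs2' : s % 2 = 1 := by omega
  have hcard : q ^ 3 = p ^ (3 * nn) := by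
    rw [hq, ← pow_mul, Nat.mul_comm nn 3]
  have h1 : ((v : F)) ^ (p / 2 * s) = -1 := by
    rw [hvF, ← map_pow, pow_mul, hEu]
    rw [map_pow, map_neg, map_one]
    exact (Nat.odd_iff.mpr hs2').neg_one_pow
  have h2 : ((v : F)) ^ (p / 2 * s) = 1 := by
    have hcc : ((v : F)) = c ^ 2 := by rw [hc]; ring
    rw [hcc, ← pow_mul]
    have he : 2 * (p / 2 * s) = q ^ 3 - 1 := by
      have h3 : 2 * (p / 2) = p - 1 := by omega
      have h4 : 2 * (p / 2 * s) = (p - 1) * s := by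
        calc 2 * (p / 2 * s) = (2 * (p / 2)) * s := by ring
        _ = (p - 1) * s := by rw [h3]
      rw [h4, hs, hcard]
    rw [he, ← hF]
    exact FiniteField.pow_card_sub_one_eq_one c hc0
  rw [h1] at h2
  have h20 : (2 : F) = 0 := by linear_combination -h2
  have hpd2 : p ∣ 2 := by
    have h4 := (CharP.cast_eq_zero_iff F p 2).mp (by exact_mod_cast h20)
    exact h4
  have := Nat.le_of_dvd (by norm_num) hpd2
  omega

set_option maxHeartbeats 2000000 in
/-- Let `q ≡ 7` or `13 (mod 24)` be a prime power, `M = 3`,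
`N = (q²+q+1)/3`, and let `I₁` be the set of indices `i ∈ Z_N` with
`ψ_{F_{q³}}(C_i^{(N,q³)}) = -3+2q`.  Then `X₁` is purely a subset of `Z_{2N}`; that is,
reduction modulo `2N` is injective on `{x ∈ X_Q : x mod N ∈ 2⁻¹I₁}`. -/
theorem stmt14 (p n q N : ℕ) [Fact p.Prime] (hq : q = p ^ n) (hn : 0 < n)
    (hq24 : q % 24 = 7 ∨ q % 24 = 13) (hN : N = (q ^ 2 + q + 1) / 3)
    (K F : Type) [Field K] [Field F] [Fintype K] [Fintype F]
    [Algebra K F] [Algebra (ZMod p) F]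
    (hK : Fintype.card K = q) (hF : Fintype.card F = q ^ 3)
    (ω : F) (hω : ∀ x : F, x ≠ 0 → ∃ k : ℕ, ω ^ k = x)
    (d₀ : ZMod (q ^ 2 + q + 1)) (hd₀ : d₀ ∈ WQ q K ω)
    (I₁ : Set (ZMod N))
    (hI₁ : I₁ = {i : ZMod N |
      psiSum (canonPsi p F) (cycClass ω N i.val) = -3 + 2 * (q : ℂ)}) :
    Set.InjOn (fun x : ZMod (2 * (q ^ 2 + q + 1)) => ((x.val : ZMod (2 * N))))
      {x ∈ XQ q K ω d₀ | ((x.val : ZMod N)) ∈ (2 : ZMod N)⁻¹ • I₁} := by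
  classical
  -- ### numeric groundwork
  have hq7 : 7 ≤ q := by rcases hq24 with h | h <;> omega
  have hq2 : q % 2 = 1 := by rcases hq24 with h | h <;> omega
  have hq3 : q % 3 = 1 := by rcases hq24 with h | h <;> omega
  have h3N : 3 * N = q ^ 2 + q + 1 := by
    obtain ⟨k, hk⟩ : ∃ k, q = 3 * k + 1 := ⟨q / 3, by omega⟩
    have hdvd : q ^ 2 + q + 1 = 3 * (3 * k * k + 3 * k + 1) := by rw [hk]; ring
    omega
  have hq2le : 49 ≤ q ^ 2 := by
    calc (49:ℕ) = 7 ^ 2 := by norm_num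
    _ ≤ q ^ 2 := Nat.pow_le_pow_left hq7 2
  have hNpos : 0 < N := by omega
  haveI : NeZero (q ^ 2 + q + 1) := ⟨by omega⟩
  haveI : NeZero (2 * (q ^ 2 + q + 1)) := ⟨by omega⟩
  obtain ⟨w3, hw3⟩ : ∃ w3, q = 3 * w3 + 1 := ⟨q / 3, by omega⟩
  have hq1 : q - 1 = 3 * w3 := by omega
  have hNodd : N % 2 = 1 := by
    have h1 : q ^ 2 % 2 = 1 := by
      have h := Nat.pow_mod q 2 2
      rw [hq2, one_pow] at h
      omega
    omega
  have hordEq : q ^ 3 - 1 = 3 * N * (q - 1) := by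
    have h1 : q ^ 3 = 3 * N * (q - 1) + 1 := by
      rw [h3N, hq1, hw3]; ring
    omega
  have hbig1 : 7 * q ≤ q * q := by nlinarith
  have hbig2 : 49 ≤ q * q := by nlinarith
  have hbig3 : q ^ 3 = (q * q) * q := by ring
  have hbig4 : 7 * (q * q) ≤ (q * q) * q := by nlinarith
  -- ### field groundwork
  haveI hCharF : CharP F p := charP_of_injective_ringHom (algebraMap (ZMod p) F).injective p
  have hp := (Fact.out : p.Prime)
  have hpds : p ∣ q := hq ▸ dvd_pow_self p hn.ne'
  have hp2 : p ≠ 2 := by rintro rfl; obtain ⟨c, hc⟩ := hpds; omega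
  have h2F : (2 : F) ≠ 0 := by
    intro h
    have h1 := (CharP.cast_eq_zero_iff F p 2).mp (by exact_mod_cast h)
    have h2 := Nat.le_of_dvd (by norm_num) h1
    have h3 := hp.two_le
    omega
  have hfrobadd : ∀ x y : F, (x + y) ^ q = x ^ q + y ^ q := by
    intro x y
    rw [hq]
    exact add_pow_char_pow x y p n
  have hω0 : ω ≠ 0 := by
    intro h0
    obtain ⟨k, hk⟩ := hω (-1) (by
      intro h
      rw [neg_eq_zero] at h
      exact one_ne_zero h)
    rw [h0] at hk
    rcases Nat.eq_zero_or_pos k with rfl | hk0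
    · rw [pow_zero] at hk
      exact h2F (by linear_combination hk)
    · rw [zero_pow hk0.ne'] at hk
      exact h2F (by linear_combination 2 * hk)
  have hQ1 : ω ^ (q ^ 3 - 1) = 1 := by
    have h := FiniteField.pow_card_sub_one_eq_one ω hω0
    rwa [hF] at h
  have hcyc : ∀ i c : ℕ, ω ^ (i + (q ^ 3 - 1) * c) = ω ^ i := by
    intro i c
    have h1 : ω ^ ((q ^ 3 - 1) * c) = 1 := by rw [pow_mul, hQ1, one_pow]
    rw [pow_add, h1, mul_one]
  have horder : orderOf (Units.mk0 ω hω0) = q ^ 3 - 1 := by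
    have hdvd : orderOf (Units.mk0 ω hω0) ∣ q ^ 3 - 1 :=
      orderOf_dvd_of_pow_eq_one (Units.ext (by simpa using hQ1))
    have hpos : 0 < orderOf (Units.mk0 ω hω0) := orderOf_pos _
    have hle : q ^ 3 - 1 ≤ orderOf (Units.mk0 ω hω0) := by
      have hsub : (Finset.univ.erase (0 : F)) ⊆
          (Finset.range (orderOf (Units.mk0 ω hω0))).image (fun k => ω ^ k) := by
        intro x hx
        obtain ⟨k, hk⟩ := hω x (Finset.ne_of_mem_erase hx)
        refine Finset.mem_image.mpr ⟨k % orderOf (Units.mk0 ω hω0),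
          Finset.mem_range.mpr (Nat.mod_lt _ hpos), ?_⟩
        have h1 : (Units.mk0 ω hω0) ^ (k % orderOf (Units.mk0 ω hω0))
            = (Units.mk0 ω hω0) ^ k := pow_mod_orderOf _ _
        calc ω ^ (k % orderOf (Units.mk0 ω hω0))
            = (((Units.mk0 ω hω0) ^ (k % orderOf (Units.mk0 ω hω0)) : Fˣ) : F) := by
              rw [Units.val_pow_eq_pow_val, Units.val_mk0]
        _ = (((Units.mk0 ω hω0) ^ k : Fˣ) : F) := by rw [h1]
        _ = ω ^ k := by rw [Units.val_pow_eq_pow_val, Units.val_mk0]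
        _ = x := hk
      have h1 := Finset.card_le_card hsub
      have h2 : (Finset.univ.erase (0 : F)).card = q ^ 3 - 1 := by
        rw [Finset.card_erase_of_mem (Finset.mem_univ _), Finset.card_univ, hF]
      have h3 := Finset.card_image_le (s := Finset.range (orderOf (Units.mk0 ω hω0)))
        (f := fun k => ω ^ k)
      rw [Finset.card_range] at h3
      omega
    exact Nat.le_antisymm (Nat.le_of_dvd (by omega) hdvd) hle
  have hpowiff : ∀ i j : ℕ, ω ^ i = ω ^ j ↔ i ≡ j [MOD q ^ 3 - 1] := by
    intro i j
    rw [← horder]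
    constructor
    · intro h
      exact pow_eq_pow_iff_modEq.mp (Units.ext (by simpa using h))
    · intro h
      have h1 : (Units.mk0 ω hω0) ^ i = (Units.mk0 ω hω0) ^ j := pow_eq_pow_iff_modEq.mpr h
      simpa using congrArg Units.val h1
  have hsmall : ∀ i j : ℕ, i < q ^ 3 - 1 → j < q ^ 3 - 1 → ω ^ i = ω ^ j → i = j := by
    intro i j hi hj h
    have h1 : i % (q ^ 3 - 1) = j % (q ^ 3 - 1) := (hpowiff i j).mp h
    rwa [Nat.mod_eq_of_lt hi, Nat.mod_eq_of_lt hj] at h1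
  -- ### the trace formula
  have hfinrank : Module.finrank K F = 3 := by
    have h := Module.card_eq_pow_finrank (K := K) (V := F)
    rw [hK, hF] at h
    exact (Nat.pow_right_injective (by omega) h.symm)
  have hKfix : ∀ c : K, (algebraMap K F c) ^ q = algebraMap K F c := by
    intro c
    rw [← map_pow]
    congr 1
    rw [← hK]
    exact FiniteField.pow_card c
  let φr : F →+* F :=
    { toFun := fun x => x ^ q
      map_one' := one_pow q
      map_mul' := fun x y => mul_pow x y q
      map_zero' := zero_pow (by omega : q ≠ 0)
      map_add' := hfrobadd }
  let φa : F →ₐ[K] F := { toRingHom := φr, commutes' := hKfix }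
  have hφinj : Function.Injective φa := φa.toRingHom.injective
  let φ : F ≃ₐ[K] F := AlgEquiv.ofBijective φa ⟨hφinj, Finite.injective_iff_surjective.mp hφinj⟩
  have hφap : ∀ x : F, φ x = x ^ q := fun x => rfl
  have hφ2ap : ∀ x : F, (φ * φ) x = (x ^ q) ^ q := fun x => rfl
  have hφ1 : φ ≠ 1 := by
    intro h
    have h1 : ω ^ q = ω ^ 1 := by
      have h2 := congrArg (fun ψ : F ≃ₐ[K] F => ψ ω) h
      simpa [hφap, pow_one] using h2
    have := hsmall q 1 (by omega) (by omega) h1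
    omega
  have hφφ1 : φ * φ ≠ 1 := by
    intro h
    have h1 : ω ^ (q * q) = ω ^ 1 := by
      have h2 := congrArg (fun ψ : F ≃ₐ[K] F => ψ ω) h
      simpa [hφ2ap, pow_one, ← pow_mul] using h2
    have := hsmall (q * q) 1 (by omega) (by omega) h1
    omega
  have hφ12 : φ ≠ φ * φ := by
    intro h
    have h1 : ω ^ q = ω ^ (q * q) := by
      have h2 := congrArg (fun ψ : F ≃ₐ[K] F => ψ ω) h
      simpa [hφap, hφ2ap, ← pow_mul] using h2
    have := hsmall q (q * q) (by omega) (by omega) h1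
    omega
  have hn1 : (1 : F ≃ₐ[K] F) ∉ ({φ, φ * φ} : Finset (F ≃ₐ[K] F)) := by
    simp only [Finset.mem_insert, Finset.mem_singleton]
    push_neg
    exact ⟨fun h => hφ1 h.symm, fun h => hφφ1 h.symm⟩
  have hn2 : φ ∉ ({φ * φ} : Finset (F ≃ₐ[K] F)) := by
    simp only [Finset.mem_singleton]
    exact hφ12
  have huniv : (Finset.univ : Finset (F ≃ₐ[K] F)) = {1, φ, φ * φ} := by
    symm
    apply Finset.eq_univ_of_card
    rw [Finset.card_insert_of_notMem hn1, Finset.card_insert_of_notMem hn2,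
      Finset.card_singleton, ← Nat.card_eq_fintype_card, IsGalois.card_aut_eq_finrank, hfinrank]
  have htr : ∀ x : F, algebraMap K F (Algebra.trace K F x) = x + x ^ q + (x ^ q) ^ q := by
    intro x
    rw [trace_eq_sum_automorphisms, huniv, Finset.sum_insert hn1, Finset.sum_insert hn2,
      Finset.sum_singleton, AlgEquiv.one_apply, hφap, hφ2ap]
    ring
  have hWt : ∀ e : ℕ, Algebra.trace K F (ω ^ (2 * e)) = 0 →
      ω ^ (2 * e) + (ω ^ (2 * e)) ^ q + ((ω ^ (2 * e)) ^ q) ^ q = 0 := by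
    intro e he
    rw [← htr (ω ^ (2 * e)), he, map_zero]
  have hd₀' : Algebra.trace K F (ω ^ (2 * d₀.val)) = 0 := hd₀
  -- ### the cube root of unity ζ
  set ζ : F := ω ^ (N * (q - 1)) with hζdef
  have hζ0 : ζ ≠ 0 := pow_ne_zero _ hω0
  have hζ3 : ζ ^ 3 = 1 := by
    rw [hζdef, ← pow_mul, show N * (q - 1) * 3 = q ^ 3 - 1 by rw [hordEq, hq1]; ring, hQ1]
  have hζne : ζ ≠ 1 := by
    intro h
    have h1 : N * (q - 1) ≡ 0 [MOD q ^ 3 - 1] := (hpowiff _ 0).mp (by rw [pow_zero]; exact h)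
    have h2 : (q ^ 3 - 1) ∣ N * (q - 1) := Nat.modEq_zero_iff_dvd.mp h1
    have h3 : 0 < N * (q - 1) := Nat.mul_pos hNpos (by omega)
    have h4 := Nat.le_of_dvd h3 h2
    have h5 : 3 * (N * (q - 1)) = 3 * N * (q - 1) := by ring
    omega
  have hζq : ζ ^ q = ζ := by
    have h1 : ζ ^ (q - 1) = 1 := by
      rw [hζdef, ← pow_mul,
        show N * (q - 1) * (q - 1) = (q ^ 3 - 1) * w3 by rw [hordEq, hq1]; ring,
        pow_mul, hQ1, one_pow]
    calc ζ ^ q = ζ ^ (q - 1) * ζ := by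
          rw [← pow_succ]; congr 1; omega
    _ = ζ := by rw [h1, one_mul]
  have hζ2ne : ζ ^ 2 ≠ 1 := by
    intro h
    apply hζne
    calc ζ = ζ ^ 3 * ζ := by rw [hζ3, one_mul]
    _ = (ζ ^ 2) ^ 2 := by ring
    _ = 1 := by rw [h, one_pow]
  have hcubesum : ∀ u : F, u ^ 3 = 1 → u ≠ 1 → 1 + u + u ^ 2 = 0 := by
    intro u h3 hne1
    have hfac : (u - 1) * (1 + u + u ^ 2) = 0 := by linear_combination h3
    rcases mul_eq_zero.mp hfac with h | h
    · exact absurd (by linear_combination h) hne1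
    · exact h
  have hζ3m : ∀ m : ℕ, (m = 1 ∨ m = 2) → ζ ^ (3 - m) = (ζ ^ m) ^ 2 := by
    intro m hm
    have h1 : ζ ^ (3 - m) * ζ ^ m = 1 := by
      rw [← pow_add, show 3 - m + m = 3 by omega, hζ3]
    have h2 : (ζ ^ m) ^ 2 * ζ ^ m = 1 := by
      rw [show (ζ ^ m) ^ 2 * ζ ^ m = (ζ ^ m) ^ 3 by ring, pow_right_comm, hζ3, one_pow]
    exact mul_right_cancel₀ (pow_ne_zero _ hζ0) (h1.trans h2.symm)
  -- ### reduction of logarithms modulo N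
  have hNdvd : N ∣ q ^ 3 - 1 := ⟨3 * (q - 1), by rw [hordEq]; ring⟩
  have hmodN : ∀ (k e : ℕ) (c : F), c ≠ 0 → c ^ q = c → ω ^ k = ω ^ e * c →
      k ≡ e [MOD N] := by
    intro k e c hc0 hcq hke
    obtain ⟨j, hj⟩ := hω c hc0
    have hc1 : c ^ (q - 1) = 1 := by
      have h2 : c ^ (q - 1) * c = 1 * c := by
        rw [← pow_succ, show q - 1 + 1 = q by omega, hcq, one_mul]
      exact mul_right_cancel₀ hc0 h2
    have h3 : ω ^ (j * (q - 1)) = ω ^ 0 := by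
      rw [pow_mul, hj, hc1, pow_zero]
    have h4 : (q ^ 3 - 1) ∣ j * (q - 1) := Nat.modEq_zero_iff_dvd.mp ((hpowiff _ 0).mp h3)
    have h5 : N ∣ j := by
      obtain ⟨c', hc'⟩ := h4
      rw [hordEq] at hc'
      have h6 : j = 3 * N * c' := by
        apply Nat.eq_of_mul_eq_mul_right (show 0 < q - 1 by omega)
        calc j * (q - 1) = 3 * N * (q - 1) * c' := hc'
        _ = 3 * N * c' * (q - 1) := by ring
      exact ⟨3 * c', by rw [h6]; ring⟩
    have h6 : ω ^ k = ω ^ (e + j) := by rw [pow_add, hj, hke]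
    have h7 : k ≡ e + j [MOD N] := Nat.ModEq.of_dvd hNdvd ((hpowiff _ _).mp h6)
    refine h7.trans ?_
    have h8 : e + j ≡ e + 0 [MOD N] :=
      Nat.ModEq.add_left e (Nat.modEq_zero_iff_dvd.mpr h5)
    simpa using h8
  -- ### the index-gap extraction
  have hmex : ∀ e₁ e₂ : ℕ, e₁ ≠ e₂ → e₁ ≡ e₂ [MOD N] → e₁ < 3 * N → e₂ < 3 * N →
      ∃ m, (m = 1 ∨ m = 2) ∧ (∃ c₁ c₂, 2 * e₂ + 6 * N * c₁ = 2 * e₁ + 2 * m * N + 6 * N * c₂) ∧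
        (∃ c₁ c₂, 2 * e₁ + 6 * N * c₁ = 2 * e₂ + 2 * (3 - m) * N + 6 * N * c₂) := by
    intro e₁ e₂ hne hmod hl1 hl2
    rcases le_total e₁ e₂ with hle | hle
    · obtain ⟨j, hj⟩ := (Nat.modEq_iff_dvd' hle).mp hmod
      have hj3 : j < 3 := by
        by_contra hcon
        push_neg at hcon
        have := Nat.mul_le_mul_left N hcon
        omega
      have hj0 : 1 ≤ j := by
        rcases Nat.eq_zero_or_pos j with rfl | h
        · omega
        · omega
      interval_cases j
      · exact ⟨1, Or.inl rfl, ⟨0, 0, by omega⟩, ⟨1, 0, by omega⟩⟩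
      · exact ⟨2, Or.inr rfl, ⟨0, 0, by omega⟩, ⟨1, 0, by omega⟩⟩
    · obtain ⟨j, hj⟩ := (Nat.modEq_iff_dvd' hle).mp hmod.symm
      have hj3 : j < 3 := by
        by_contra hcon
        push_neg at hcon
        have := Nat.mul_le_mul_left N hcon
        omega
      have hj0 : 1 ≤ j := by
        rcases Nat.eq_zero_or_pos j with rfl | h
        · omega
        · omega
      interval_cases j
      · exact ⟨2, Or.inr rfl, ⟨1, 0, by omega⟩, ⟨0, 0, by omega⟩⟩
      · exact ⟨1, Or.inl rfl, ⟨1, 0, by omega⟩, ⟨0, 0, by omega⟩⟩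
  -- ### the eigenvalue lemma
  have keyEig : ∀ e₁ e₂ m : ℕ, (m = 1 ∨ m = 2) →
      (ω ^ (2 * e₁) + (ω ^ (2 * e₁)) ^ q + ((ω ^ (2 * e₁)) ^ q) ^ q = 0) →
      (ω ^ (2 * e₂) + (ω ^ (2 * e₂)) ^ q + ((ω ^ (2 * e₂)) ^ q) ^ q = 0) →
      (∃ c₁ c₂, 2 * e₂ + 6 * N * c₁ = 2 * e₁ + 2 * m * N + 6 * N * c₂) →
      ω ^ (e₁ * q) = ζ ^ m * ω ^ e₁ := by
    intro e₁ e₂ m hm h1 h2 hrel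
    obtain ⟨c₁, c₂, hrel⟩ := hrel
    have hs3 : (ζ ^ m) ^ 3 = 1 := by rw [pow_right_comm, hζ3, one_pow]
    have hsne : ζ ^ m ≠ 1 := by
      rcases hm with rfl | rfl
      · simpa using hζne
      · exact hζ2ne
    have hssum : 1 + ζ ^ m + (ζ ^ m) ^ 2 = 0 := hcubesum _ hs3 hsne
    have hsq : (ζ ^ m) ^ q = ζ ^ m := by rw [pow_right_comm, hζq]
    have hs2q : ((ζ ^ m) ^ 2) ^ q = (ζ ^ m) ^ 2 := by rw [pow_right_comm, hsq]
    have hB : ∀ c : ℕ, (ω ^ (6 * N * c)) ^ q = ω ^ (6 * N * c) := by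
      intro c
      rw [← pow_mul, show 6 * N * c * q = 6 * N * c + (q ^ 3 - 1) * (2 * c) by
        rw [hordEq, hq1, hw3]; ring, hcyc]
    have hTmul : ∀ (x : F) (c : ℕ), (x + x ^ q + (x ^ q) ^ q) * ω ^ (6 * N * c) =
        (x * ω ^ (6 * N * c)) + (x * ω ^ (6 * N * c)) ^ q +
          ((x * ω ^ (6 * N * c)) ^ q) ^ q := by
      intro x c
      rw [mul_pow, hB c, mul_pow, hB c]
      ring
    have hEq : ω ^ (2 * e₂) * ω ^ (6 * N * c₁) = ω ^ (2 * e₁ + 2 * m * N) * ω ^ (6 * N * c₂) := by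
      rw [← pow_add, ← pow_add]
      exact congrArg (fun t => ω ^ t) hrel
    have h2' : ω ^ (2 * e₁ + 2 * m * N) + (ω ^ (2 * e₁ + 2 * m * N)) ^ q +
        ((ω ^ (2 * e₁ + 2 * m * N)) ^ q) ^ q = 0 := by
      have hA : (ω ^ (2 * e₂) * ω ^ (6 * N * c₁)) + (ω ^ (2 * e₂) * ω ^ (6 * N * c₁)) ^ q +
          ((ω ^ (2 * e₂) * ω ^ (6 * N * c₁)) ^ q) ^ q = 0 := by
        rw [← hTmul, h2, zero_mul]
      rw [hEq, ← hTmul] at hA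
      exact (mul_eq_zero.mp hA).resolve_right (pow_ne_zero _ hω0)
    have hwq : (ω ^ (2 * m * N)) ^ q = (ζ ^ m) ^ 2 * ω ^ (2 * m * N) := by
      rw [← pow_mul, show 2 * m * N * q = N * (q - 1) * (m * 2) + 2 * m * N by
        rw [hq1, hw3]; ring, pow_add]
      congr 1
      rw [hζdef, ← pow_mul, ← pow_mul]
    have hsplit : ω ^ (2 * e₁ + 2 * m * N) = ω ^ (2 * e₁) * ω ^ (2 * m * N) := pow_add ω _ _
    rw [hsplit, mul_pow, hwq, mul_pow, mul_pow, hs2q, hwq] at h2'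
    have h2'' : ω ^ (2 * e₁) + (ζ ^ m) ^ 2 * (ω ^ (2 * e₁)) ^ q +
        (ζ ^ m) ^ 4 * ((ω ^ (2 * e₁)) ^ q) ^ q = 0 := by
      have hww : ω ^ (2 * m * N) ≠ 0 := pow_ne_zero _ hω0
      have hA2 : (ω ^ (2 * e₁) + (ζ ^ m) ^ 2 * (ω ^ (2 * e₁)) ^ q +
          (ζ ^ m) ^ 4 * ((ω ^ (2 * e₁)) ^ q) ^ q) * ω ^ (2 * m * N) = 0 := by
        linear_combination h2'
      exact (mul_eq_zero.mp hA2).resolve_right hww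
    have hd : (1 - ζ ^ m) * (((ω ^ (2 * e₁)) ^ q) ^ q - (ζ ^ m) ^ 2 * (ω ^ (2 * e₁)) ^ q) = 0 := by
      linear_combination h1 - h2'' + ((ω ^ (2 * e₁)) ^ q) * hs3 +
        ζ ^ m * (((ω ^ (2 * e₁)) ^ q) ^ q) * hs3
    have hzqq : ((ω ^ (2 * e₁)) ^ q) ^ q = (ζ ^ m) ^ 2 * (ω ^ (2 * e₁)) ^ q := by
      rcases mul_eq_zero.mp hd with h | h
      · exact absurd (by linear_combination -h) hsne
      · linear_combination h
    have hzeig : ω ^ (2 * e₁) = ζ ^ m * (ω ^ (2 * e₁)) ^ q := by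
      linear_combination h1 - hzqq - ((ω ^ (2 * e₁)) ^ q) * hssum
    have hzq : (ω ^ (2 * e₁)) ^ q = (ζ ^ m) ^ 2 * ω ^ (2 * e₁) := by
      linear_combination (-((ζ ^ m) ^ 2)) * hzeig + (-((ω ^ (2 * e₁)) ^ q)) * hs3
    have hz0 : ω ^ (2 * e₁) ≠ 0 := pow_ne_zero _ hω0
    have hXz : ω ^ (2 * e₁ * (q - 1)) * ω ^ (2 * e₁) = (ω ^ (2 * e₁)) ^ q := by
      rw [← pow_add, ← pow_mul]
      congr 1
      rw [hq1, hw3]; ring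
    have hX2 : ω ^ (2 * e₁ * (q - 1)) = (ζ ^ m) ^ 2 := by
      rw [hzq] at hXz
      exact mul_right_cancel₀ hz0 hXz
    have hYsplit : ω ^ ((e₁ + 2 * m * N) * (q - 1)) = ω ^ (e₁ * (q - 1)) * (ζ ^ m) ^ 2 := by
      rw [hζdef, ← pow_mul, ← pow_mul, ← pow_add]
      congr 1
      rw [hq1]; ring
    have hY2 : (ω ^ ((e₁ + 2 * m * N) * (q - 1))) ^ 2 = 1 := by
      rw [hYsplit, mul_pow, show (ω ^ (e₁ * (q - 1))) ^ 2 = ω ^ (2 * e₁ * (q - 1)) by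
        rw [← pow_mul]; congr 1; ring, hX2]
      linear_combination ((ζ ^ m) ^ 3 + 1) * hs3
    have hYdvd : (q ^ 3 - 1) ∣ (e₁ + 2 * m * N) * (q - 1) * 2 := by
      have h := (hpowiff ((e₁ + 2 * m * N) * (q - 1) * 2) 0).mp (by rw [pow_mul, hY2, pow_zero])
      exact Nat.modEq_zero_iff_dvd.mp h
    have hY1 : ω ^ ((e₁ + 2 * m * N) * (q - 1)) = 1 := by
      obtain ⟨c, hc⟩ := hYdvd
      rw [hordEq] at hc
      have h2j : (e₁ + 2 * m * N) * 2 = 3 * N * c := by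
        apply Nat.eq_of_mul_eq_mul_right (show 0 < q - 1 by omega)
        calc (e₁ + 2 * m * N) * 2 * (q - 1) = (e₁ + 2 * m * N) * (q - 1) * 2 := by ring
        _ = 3 * N * (q - 1) * c := hc
        _ = 3 * N * c * (q - 1) := by ring
      have hdvd23 : (3 * N) ∣ (e₁ + 2 * m * N) * 2 := ⟨c, h2j⟩
      have hcop : Nat.Coprime (3 * N) 2 := by
        have hno : ¬ 2 ∣ 3 * N := by omega
        exact Nat.coprime_comm.mp ((Nat.prime_two.coprime_iff_not_dvd).mpr hno)
      obtain ⟨j', hj'⟩ := hcop.dvd_of_dvd_mul_right hdvd23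
      rw [hj', show 3 * N * j' * (q - 1) = (q ^ 3 - 1) * j' by rw [hordEq]; ring,
        pow_mul, hQ1, one_pow]
    have hXs : ω ^ (e₁ * (q - 1)) * (ζ ^ m) ^ 2 = 1 := by rw [← hYsplit]; exact hY1
    have hXval : ω ^ (e₁ * (q - 1)) = ζ ^ m := by
      calc ω ^ (e₁ * (q - 1)) = ω ^ (e₁ * (q - 1)) * ((ζ ^ m) ^ 2 * ζ ^ m) := by
            rw [show (ζ ^ m) ^ 2 * ζ ^ m = (ζ ^ m) ^ 3 by ring, hs3, mul_one]
      _ = (ω ^ (e₁ * (q - 1)) * (ζ ^ m) ^ 2) * ζ ^ m := by ring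
      _ = ζ ^ m := by rw [hXs, one_mul]
    calc ω ^ (e₁ * q) = ω ^ (e₁ * (q - 1)) * ω ^ e₁ := by
          rw [← pow_add]; congr 1; rw [hq1, hw3]; ring
    _ = ζ ^ m * ω ^ e₁ := by rw [hXval]
  -- ### the two contradiction cases
  have genGen : ∀ (k k' : ℕ) (d d' : ZMod (q ^ 2 + q + 1)), k ≡ k' [MOD 2 * N] →
      Algebra.trace K F (ω ^ (2 * d.val)) = 0 → Algebra.trace K F (ω ^ (2 * d'.val)) = 0 →
      d ≠ d' →
      ω ^ k = ω ^ d.val * algebraMap K F (Algebra.trace K F (ω ^ (d₀.val + d.val))) →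
      ω ^ k' = ω ^ d'.val * algebraMap K F (Algebra.trace K F (ω ^ (d₀.val + d'.val))) →
      False := by
    intro k k' d d' hkk htd htd' hdd hx hx'
    have hc₁0 : algebraMap K F (Algebra.trace K F (ω ^ (d₀.val + d.val))) ≠ 0 := by
      intro h
      rw [h, mul_zero] at hx
      exact (pow_ne_zero k hω0) hx
    have hc₂0 : algebraMap K F (Algebra.trace K F (ω ^ (d₀.val + d'.val))) ≠ 0 := by
      intro h
      rw [h, mul_zero] at hx'
      exact (pow_ne_zero k' hω0) hx'
    have hm₁ : k ≡ d.val [MOD N] := hmodN k d.val _ hc₁0 (hKfix _) hx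
    have hm₂ : k' ≡ d'.val [MOD N] := hmodN k' d'.val _ hc₂0 (hKfix _) hx'
    have hkkN : k ≡ k' [MOD N] := Nat.ModEq.of_dvd ⟨2, by ring⟩ hkk
    have he12 : d.val ≡ d'.val [MOD N] := (hm₁.symm.trans hkkN).trans hm₂
    have hne : d.val ≠ d'.val := fun h => hdd (ZMod.val_injective _ h)
    have hlt₁ : d.val < 3 * N := by rw [h3N]; exact ZMod.val_lt d
    have hlt₂ : d'.val < 3 * N := by rw [h3N]; exact ZMod.val_lt d'
    obtain ⟨m, hm, hrel₁, hrel₂⟩ := hmex d.val d'.val hne he12 hlt₁ hlt₂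
    have heig₁ : ω ^ (d.val * q) = ζ ^ m * ω ^ d.val :=
      keyEig d.val d'.val m hm (hWt _ htd) (hWt _ htd') hrel₁
    have heig₂ : ω ^ (d'.val * q) = (ζ ^ m) ^ 2 * ω ^ d'.val := by
      have h := keyEig d'.val d.val (3 - m) (by omega) (hWt _ htd') (hWt _ htd) hrel₂
      rwa [hζ3m m hm] at h
    have hE1q : (ω ^ d.val) ^ q = ζ ^ m * ω ^ d.val := by rw [← pow_mul]; exact heig₁
    have hE2q : (ω ^ d'.val) ^ q = (ζ ^ m) ^ 2 * ω ^ d'.val := by rw [← pow_mul]; exact heig₂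
    have hsq' : (ζ ^ m) ^ q = ζ ^ m := by rw [pow_right_comm, hζq]
    have hs2q' : ((ζ ^ m) ^ 2) ^ q = (ζ ^ m) ^ 2 := by rw [pow_right_comm, hsq']
    have hs3' : (ζ ^ m) ^ 3 = 1 := by rw [pow_right_comm, hζ3, one_pow]
    have hsum' : 1 + ζ ^ m + (ζ ^ m) ^ 2 = 0 := hcubesum _ hs3' (by
      rcases hm with rfl | rfl
      · simpa using hζne
      · exact hζ2ne)
    have hT₁ : algebraMap K F (Algebra.trace K F (ω ^ (d₀.val + d.val))) =
        ω ^ d.val * (ω ^ d₀.val + ζ ^ m * (ω ^ d₀.val) ^ q +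
          (ζ ^ m) ^ 2 * ((ω ^ d₀.val) ^ q) ^ q) := by
      rw [htr, pow_add, mul_pow, hE1q, mul_pow, mul_pow, hsq', hE1q]
      ring
    have hT₂ : algebraMap K F (Algebra.trace K F (ω ^ (d₀.val + d'.val))) =
        ω ^ d'.val * (ω ^ d₀.val + (ζ ^ m) ^ 2 * (ω ^ d₀.val) ^ q +
          (ζ ^ m) ^ 4 * ((ω ^ d₀.val) ^ q) ^ q) := by
      rw [htr, pow_add, mul_pow, hE2q, mul_pow, mul_pow, hs2q', hE2q]
      ring
    have hYY : (ω ^ d₀.val) ^ 2 + ((ω ^ d₀.val) ^ q) ^ 2 + (((ω ^ d₀.val) ^ q) ^ q) ^ 2 = 0 := by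
      have h0 := hWt d₀.val hd₀'
      rw [show 2 * d₀.val = d₀.val * 2 by ring, pow_mul,
        pow_right_comm (ω ^ d₀.val) 2 q, pow_right_comm ((ω ^ d₀.val) ^ q) 2 q] at h0
      exact h0
    have hP : (ω ^ d₀.val + ζ ^ m * (ω ^ d₀.val) ^ q + (ζ ^ m) ^ 2 * ((ω ^ d₀.val) ^ q) ^ q) *
        (ω ^ d₀.val + (ζ ^ m) ^ 2 * (ω ^ d₀.val) ^ q + (ζ ^ m) ^ 4 * ((ω ^ d₀.val) ^ q) ^ q) =
        -(ω ^ d₀.val * (ω ^ d₀.val) ^ q + ω ^ d₀.val * ((ω ^ d₀.val) ^ q) ^ q +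
          (ω ^ d₀.val) ^ q * ((ω ^ d₀.val) ^ q) ^ q) := by
      linear_combination hYY +
        (((ω ^ d₀.val) ^ q) ^ 2 + ((ζ ^ m) ^ 3 + 1) * ((((ω ^ d₀.val) ^ q) ^ q) ^ 2) +
          ζ ^ m * (ω ^ d₀.val * ((ω ^ d₀.val) ^ q) ^ q) +
          (ζ ^ m + (ζ ^ m) ^ 2) * ((ω ^ d₀.val) ^ q * ((ω ^ d₀.val) ^ q) ^ q)) * hs3' +
        (ω ^ d₀.val * (ω ^ d₀.val) ^ q + ω ^ d₀.val * ((ω ^ d₀.val) ^ q) ^ q +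
          (ω ^ d₀.val) ^ q * ((ω ^ d₀.val) ^ q) ^ q) * hsum'
    have h2M : (ω ^ d₀.val + (ω ^ d₀.val) ^ q + ((ω ^ d₀.val) ^ q) ^ q) ^ 2 =
        2 * (ω ^ d₀.val * (ω ^ d₀.val) ^ q + ω ^ d₀.val * ((ω ^ d₀.val) ^ q) ^ q +
          (ω ^ d₀.val) ^ q * ((ω ^ d₀.val) ^ q) ^ q) := by
      linear_combination hYY
    have hfin : (ω ^ d.val * ω ^ d'.val *
        (ω ^ d₀.val + (ω ^ d₀.val) ^ q + ((ω ^ d₀.val) ^ q) ^ q)) ^ 2 =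
        -2 * (ω ^ k * ω ^ k') := by
      rw [hx, hx', hT₁, hT₂]
      linear_combination ((ω ^ d.val) ^ 2 * (ω ^ d'.val) ^ 2) * h2M +
        (2 * (ω ^ d.val) ^ 2 * (ω ^ d'.val) ^ 2) * hP
    have hpar : k % 2 = k' % 2 := Nat.ModEq.of_dvd ⟨N, rfl⟩ hkk
    obtain ⟨hh, hhh⟩ : ∃ hh, k + k' = 2 * hh := ⟨(k + k') / 2, by omega⟩
    have hωh : (ω ^ hh : F) ≠ 0 := pow_ne_zero _ hω0
    have hR2 : (ω ^ d.val * ω ^ d'.val *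
        (ω ^ d₀.val + (ω ^ d₀.val) ^ q + ((ω ^ d₀.val) ^ q) ^ q)) ^ 2 = -2 * (ω ^ hh) ^ 2 := by
      rw [hfin]
      congr 1
      calc ω ^ k * ω ^ k' = ω ^ (k + k') := (pow_add ω k k').symm
      _ = ω ^ (hh * 2) := by congr 1; omega
      _ = (ω ^ hh) ^ 2 := pow_mul ω hh 2
    have hsqq : IsSquare (((-2 : ℤ) : F)) := by
      refine ⟨(ω ^ d.val * ω ^ d'.val *
        (ω ^ d₀.val + (ω ^ d₀.val) ^ q + ((ω ^ d₀.val) ^ q) ^ q)) * (ω ^ hh)⁻¹, ?_⟩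
      have hg : (((-2 : ℤ)) : F) = -2 := by push_cast; ring
      rw [hg]
      field_simp
      linear_combination -hR2
    exact st14_nonsq hq hn hq24 F hF (-2) (Or.inl rfl) hsqq
  have mixedCase : ∀ (k k' : ℕ) (d : ZMod (q ^ 2 + q + 1)), k ≡ k' [MOD 2 * N] →
      Algebra.trace K F (ω ^ (2 * d.val)) = 0 → d ≠ d₀ →
      ω ^ k = 2 * ω ^ d₀.val →
      ω ^ k' = ω ^ d.val * algebraMap K F (Algebra.trace K F (ω ^ (d₀.val + d.val))) →
      False := by
    intro k k' d hkk htd hdne hx hx'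
    have h2q : (2 : F) ^ q = 2 := by
      have h := hfrobadd 1 1
      norm_num at h
      exact h
    have hc₂0 : algebraMap K F (Algebra.trace K F (ω ^ (d₀.val + d.val))) ≠ 0 := by
      intro h
      rw [h, mul_zero] at hx'
      exact (pow_ne_zero k' hω0) hx'
    have hm₁ : k ≡ d₀.val [MOD N] := hmodN k d₀.val 2 h2F h2q (hx.trans (mul_comm _ _))
    have hm₂ : k' ≡ d.val [MOD N] := hmodN k' d.val _ hc₂0 (hKfix _) hx'
    have hkkN : k ≡ k' [MOD N] := Nat.ModEq.of_dvd ⟨2, by ring⟩ hkk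
    have he12 : d₀.val ≡ d.val [MOD N] := (hm₁.symm.trans hkkN).trans hm₂
    have hne : d₀.val ≠ d.val := fun h => hdne (ZMod.val_injective _ h).symm
    have hlt₁ : d₀.val < 3 * N := by rw [h3N]; exact ZMod.val_lt d₀
    have hlt₂ : d.val < 3 * N := by rw [h3N]; exact ZMod.val_lt d
    obtain ⟨m, hm, hrel₁, hrel₂⟩ := hmex d₀.val d.val hne he12 hlt₁ hlt₂
    have heigA : ω ^ (d₀.val * q) = ζ ^ m * ω ^ d₀.val :=
      keyEig d₀.val d.val m hm (hWt _ hd₀') (hWt _ htd) hrel₁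
    have heigE : ω ^ (d.val * q) = (ζ ^ m) ^ 2 * ω ^ d.val := by
      have h := keyEig d.val d₀.val (3 - m) (by omega) (hWt _ htd) (hWt _ hd₀') hrel₂
      rwa [hζ3m m hm] at h
    have hs3' : (ζ ^ m) ^ 3 = 1 := by rw [pow_right_comm, hζ3, one_pow]
    have hW : (ω ^ (d₀.val + d.val)) ^ q = ω ^ (d₀.val + d.val) := by
      rw [← pow_mul, show (d₀.val + d.val) * q = d₀.val * q + d.val * q by ring,
        pow_add, heigA, heigE, pow_add]
      linear_combination (ω ^ d₀.val * ω ^ d.val) * hs3'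
    have hT : algebraMap K F (Algebra.trace K F (ω ^ (d₀.val + d.val))) =
        3 * ω ^ (d₀.val + d.val) := by
      rw [htr, hW, hW]
      ring
    have hfin : ω ^ k * ω ^ k' = 6 * (ω ^ (d₀.val + d.val)) ^ 2 := by
      rw [hx, hx', hT, pow_add]
      ring
    have hpar : k % 2 = k' % 2 := Nat.ModEq.of_dvd ⟨N, rfl⟩ hkk
    obtain ⟨hh, hhh⟩ : ∃ hh, k + k' = 2 * hh := ⟨(k + k') / 2, by omega⟩
    have hW0 : ω ^ (d₀.val + d.val) ≠ 0 := pow_ne_zero _ hω0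
    have hR2 : (6 : F) * (ω ^ (d₀.val + d.val)) ^ 2 = (ω ^ hh) ^ 2 := by
      rw [← hfin]
      calc ω ^ k * ω ^ k' = ω ^ (k + k') := (pow_add ω k k').symm
      _ = ω ^ (hh * 2) := by congr 1; omega
      _ = (ω ^ hh) ^ 2 := pow_mul ω hh 2
    have hsqq : IsSquare (((6 : ℤ) : F)) := by
      refine ⟨(ω ^ hh) * (ω ^ (d₀.val + d.val))⁻¹, ?_⟩
      have hg : (((6 : ℤ)) : F) = 6 := by push_cast; ring
      rw [hg]
      field_simp
      linear_combination hR2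
    exact st14_nonsq hq hn hq24 F hF 6 (Or.inr rfl) hsqq
  -- ### main argument
  intro a₁ ha₁ a₂ ha₂ himg
  have h' : ((a₁.val : ZMod (2 * N))) = ((a₂.val : ZMod (2 * N))) := himg
  obtain ⟨⟨x₁, hsx₁, k₁, hxk₁, hak₁⟩, -⟩ := ha₁
  obtain ⟨⟨x₂, hsx₂, k₂, hxk₂, hak₂⟩, -⟩ := ha₂
  have hval1 : a₁.val = k₁ % (2 * (q ^ 2 + q + 1)) := by rw [hak₁, ZMod.val_natCast]
  have hval2 : a₂.val = k₂ % (2 * (q ^ 2 + q + 1)) := by rw [hak₂, ZMod.val_natCast]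
  have hdvd2N : (2 * N) ∣ (2 * (q ^ 2 + q + 1)) := ⟨3, by rw [← h3N]; ring⟩
  have d1 : a₁.val ≡ k₁ [MOD 2 * (q ^ 2 + q + 1)] := by
    rw [hval1]; exact Nat.mod_modEq k₁ _
  have d2 : a₂.val ≡ k₂ [MOD 2 * (q ^ 2 + q + 1)] := by
    rw [hval2]; exact Nat.mod_modEq k₂ _
  have himgM : a₁.val ≡ a₂.val [MOD 2 * N] := (ZMod.natCast_eq_natCast_iff _ _ _).mp h'
  have hchain : k₁ ≡ k₂ [MOD 2 * N] :=
    (((Nat.ModEq.of_dvd hdvd2N d1).symm.trans himgM).trans (Nat.ModEq.of_dvd hdvd2N d2))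
  by_cases hxx : x₁ = x₂
  · have hkk : ω ^ k₁ = ω ^ k₂ := by rw [← hxk₁, ← hxk₂, hxx]
    have hmm := (hpowiff k₁ k₂).mp hkk
    have hdvdQ : (2 * (q ^ 2 + q + 1)) ∣ (q ^ 3 - 1) := by
      obtain ⟨u, hu⟩ : ∃ u, q - 1 = 2 * u := ⟨(q - 1) / 2, by omega⟩
      exact ⟨u, by rw [hordEq, hu, ← h3N]; ring⟩
    rw [hak₁, hak₂]
    exact (ZMod.natCast_eq_natCast_iff _ _ _).mpr (Nat.ModEq.of_dvd hdvdQ hmm)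
  · exfalso
    rcases hsx₁ with h1 | h1 <;> rcases hsx₂ with h2 | h2
    · obtain ⟨dd₁, hd₁W, hd₁ne, he₁⟩ := h1
      obtain ⟨dd₂, hd₂W, hd₂ne, he₂⟩ := h2
      by_cases hdd : dd₁ = dd₂
      · exact hxx (by rw [he₁, he₂, hdd])
      · exact genGen k₁ k₂ dd₁ dd₂ hchain hd₁W hd₂W hdd
          (hxk₁.symm.trans he₁) (hxk₂.symm.trans he₂)
    · obtain ⟨dd₁, hd₁W, hd₁ne, he₁⟩ := h1
      have he₂ : x₂ = 2 * ω ^ d₀.val := h2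
      exact mixedCase k₂ k₁ dd₁ hchain.symm hd₁W hd₁ne
        (hxk₂.symm.trans he₂) (hxk₁.symm.trans he₁)
    · have he₁ : x₁ = 2 * ω ^ d₀.val := h1
      obtain ⟨dd₂, hd₂W, hd₂ne, he₂⟩ := h2
      exact mixedCase k₁ k₂ dd₂ hchain hd₂W hd₂ne
        (hxk₁.symm.trans he₁) (hxk₂.symm.trans he₂)
    · have he₁ : x₁ = 2 * ω ^ d₀.val := h1
      have he₂ : x₂ = 2 * ω ^ d₀.val := h2
      exact hxx (he₁.trans he₂.symm)
end

section
/- Let q be an odd prime power, M a positive integer dividing q²+q+1, N = (q²+q+1)/M, and assume the Gauss periods ψ_{F_{q³}}(C_i^{(N,q³)}) take exactly the three values −M+2q, −M+q, −M with value sets I_1, I_2, I_3. Let u ∈ W_Q with u mod N ∈ 2^{-1}I_1, let ℓ_u be the unique element of {1,…,M−1} with u+ℓ_u·N ∈ W_Q (mod q²+q+1), and set g_M(ω^u) := Tr_{q³/q}(ω^{2u+ℓ_u N})·ω^{ℓ_u N}. Then η(g_M(ω^u)) = η(−1)·η(1−ω^{ℓ_u(q+1)(q³−1)/M})·η(1−ω^{2ℓ_u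 q(q³−1)/M}), where η is the quadratic character of F_{q³}. -/
open scoped Classical Pointwise

/-- Under the three-valued Gauss-period assumption, for `u ∈ W_Q`
with `u mod N ∈ 2⁻¹I₁` and `ℓ_u` the (unique) element of `{1,…,M-1}` with
`u + ℓ_u·N ∈ W_Q`, setting `g_M(ω^u) := Tr_{q³/q}(ω^{2u+ℓ_uN})·ω^{ℓ_uN}` one has
`η(g_M(ω^u)) = η(-1)·η(1-ω^{ℓ_u(q+1)(q³-1)/M})·η(1-ω^{2ℓ_u q(q³-1)/M})`,
where `η` is the quadratic character of `F_{q³}`. -/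
theorem stmt16 (p n q M N : ℕ) [Fact p.Prime] (hq : q = p ^ n) (hn : 0 < n)
    (hodd : Odd q) (hM : 0 < M) (hMdvd : M ∣ q ^ 2 + q + 1)
    (hN : N = (q ^ 2 + q + 1) / M)
    (K F : Type) [Field K] [Field F] [Fintype K] [Fintype F]
    [Algebra K F] [Algebra (ZMod p) F]
    (hK : Fintype.card K = q) (hF : Fintype.card F = q ^ 3)
    (ω : F) (hω : ∀ x : F, x ≠ 0 → ∃ k : ℕ, ω ^ k = x)
    (hthree : {v : ℂ | ∃ i < N, psiSum (canonPsi p F) (cycClass ω N i) = v}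
      = {(-(M : ℂ) + 2 * (q : ℂ)), (-(M : ℂ) + (q : ℂ)), (-(M : ℂ))})
    (I₁ : Set (ZMod N))
    (hI₁ : I₁ = {i : ZMod N |
      psiSum (canonPsi p F) (cycClass ω N i.val) = -(M : ℂ) + 2 * (q : ℂ)})
    (u : ZMod (q ^ 2 + q + 1)) (hu : u ∈ WQ q K ω)
    (huI : ((u.val : ZMod N)) ∈ (2 : ZMod N)⁻¹ • I₁)
    (ℓu : ℕ) (hℓu1 : 1 ≤ ℓu) (hℓu2 : ℓu ≤ M - 1)
    (hℓuW : u + ((ℓu * N : ℕ) : ZMod (q ^ 2 + q + 1)) ∈ WQ q K ω)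
    (η : MulChar F ℂ) (hη : orderOf η = 2) :
    η (algebraMap K F (Algebra.trace K F (ω ^ (2 * u.val + ℓu * N))) * ω ^ (ℓu * N))
      = η (-1) * η (1 - ω ^ (ℓu * (q + 1) * ((q ^ 3 - 1) / M)))
          * η (1 - ω ^ (2 * ℓu * q * ((q ^ 3 - 1) / M))) := by

  clear hthree hI₁ huI
  -- `p` is odd, so `q ≥ 3`
  have hp2 : 2 ≤ p := (Fact.out : p.Prime).two_le
  have hq2 : 2 ≤ q := by
    rw [hq]
    calc 2 ≤ p := hp2
    _ ≤ p ^ n := Nat.le_self_pow hn.ne' p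
  have hq3 : 3 ≤ q := by
    obtain ⟨k0, hk0⟩ := hodd; omega
  -- write q = w + 1
  obtain ⟨w, rfl⟩ : ∃ w, q = w + 1 := ⟨q - 1, by omega⟩
  have hw2 : 2 ≤ w := by omega
  obtain ⟨w2, hw2e⟩ : ∃ w2, w = w2 * 2 := by
    obtain ⟨k0, hk0⟩ := hodd; exact ⟨k0, by omega⟩
  have hM2 : 2 ≤ M := by omega
  -- basic arithmetic facts
  have hNM : N * M = (w+1)^2 + (w+1) + 1 := by
    rw [hN]; exact Nat.div_mul_cancel hMdvd
  have hNpos : 0 < N := by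
    rcases Nat.eq_zero_or_pos N with h | h
    · exfalso; rw [h, zero_mul] at hNM
      have : 0 < (w+1)^2 := by positivity
      omega
    · exact h
  have hq31 : ((w+1)^2 + (w+1) + 1) * w = (w+1)^3 - 1 := by
    have h3 : (w+1)^3 = w^3 + 3*w^2 + 3*w + 1 := by ring
    have h2 : ((w+1)^2 + (w+1) + 1) * w = w^3 + 3*w^2 + 3*w := by ring
    omega
  have hkN : ((w+1)^3 - 1) / M = N * w := by
    refine Nat.div_eq_of_eq_mul_left hM ?_
    rw [← hq31, ← hNM]; ring
  -- characteristic of F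
  haveI : CharP F p := charP_of_injective_algebraMap (algebraMap (ZMod p) F).injective p
  -- ω is a primitive element
  have hpne2 : p ≠ 2 := by
    intro hp
    have h2d : 2 ∣ (w + 1) := by rw [hq, hp]; exact dvd_pow_self 2 hn.ne'
    obtain ⟨k0, hk0⟩ := hodd
    omega
  have hω0 : ω ≠ 0 := by
    intro h
    obtain ⟨k, hk⟩ := hω (-1) (neg_ne_zero.mpr one_ne_zero)
    have h2F : (2 : F) ≠ 0 := by
      intro h2
      have hdvd := (CharP.cast_eq_zero_iff F p 2).mp h2
      have := Nat.le_of_dvd (by norm_num) hdvd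
      omega
    rcases k with _ | k
    · rw [pow_zero] at hk
      exact h2F (by linear_combination hk)
    · rw [h, zero_pow (Nat.succ_ne_zero k)] at hk
      exact (neg_ne_zero.mpr one_ne_zero) hk.symm
  have hmk : orderOf (Units.mk0 ω hω0) = (w+1)^3 - 1 := by
    have h1 : orderOf (Units.mk0 ω hω0) = Nat.card Fˣ := by
      apply orderOf_eq_card_of_forall_mem_zpowers
      intro x
      obtain ⟨k, hk⟩ := hω (x : F) (Units.ne_zero x)
      rw [Subgroup.mem_zpowers_iff]
      refine ⟨(k : ℤ), ?_⟩
      rw [zpow_natCast]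
      ext
      simpa using hk
    rw [h1, Nat.card_eq_fintype_card, Fintype.card_units, hF]
  have horder : orderOf ω = (w+1)^3 - 1 := by
    have h2 := orderOf_units (y := Units.mk0 ω hω0)
    rw [Units.val_mk0] at h2
    rw [h2, hmk]
  have hOdvd : ∀ m : ℕ, ω ^ m = 1 ↔ ((w+1)^3 - 1) ∣ m := by
    intro m
    rw [← horder, orderOf_dvd_iff_pow_eq_one]
  have hpow1 : ω ^ ((w+1)^3 - 1) = 1 := (hOdvd _).mpr dvd_rfl
  -- coprimality: M is coprime to 2*(w+1)
  have hQodd : Odd ((w+1)^2 + (w+1) + 1) := by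
    rcases Nat.even_or_odd (w+1) with ⟨t, ht⟩ | ⟨t, ht⟩
    · exact ⟨2*t*t + t, by rw [ht]; ring⟩
    · exact ⟨2*t*t + 3*t + 1, by rw [ht]; ring⟩
  have hcop : Nat.Coprime M (2 * (w+1)) := by
    have hc2 : Nat.Coprime ((w+1)^2 + (w+1) + 1) 2 := by
      obtain ⟨t, ht⟩ := hQodd
      rw [ht]
      have := (Nat.coprime_mul_left_add_left 1 2 t).mpr (Nat.coprime_one_left 2)
      simpa [mul_comm] using this
    have hcq : Nat.Coprime ((w+1)^2 + (w+1) + 1) (w+1) := by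
      have he : (w+1)^2 + (w+1) + 1 = (w+1) * ((w+1)+1) + 1 := by ring
      rw [he]
      exact (Nat.coprime_mul_left_add_left 1 (w+1) ((w+1)+1)).mpr (Nat.coprime_one_left _)
    exact Nat.Coprime.mul_right (Nat.Coprime.coprime_dvd_left hMdvd hc2)
      (Nat.Coprime.coprime_dvd_left hMdvd hcq)
  -- the master nondivisibility fact
  have hMnd : ¬ ((w+1)^3 - 1) ∣ ℓu * N * w * (2 * (w+1)) := by
    intro hdvd
    rw [← hq31] at hdvd
    have e1 : ((w+1)^2 + (w+1) + 1) * w = M * (N * w) := by rw [← hNM]; ring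
    have e2 : ℓu * N * w * (2 * (w+1)) = (ℓu * (2 * (w+1))) * (N * w) := by ring
    rw [e1, e2] at hdvd
    have hNw : 0 < N * w := by positivity
    have hdvdM : M ∣ ℓu * (2 * (w+1)) := (Nat.mul_dvd_mul_iff_right hNw).mp hdvd
    have hMl : M ∣ ℓu := Nat.Coprime.dvd_of_dvd_mul_right hcop hdvdM
    have := Nat.le_of_dvd (by omega) hMl
    omega
  ---------------------------------------------------------------------------
  -- the trace formula: algebraMap K F (Tr x) = x + x^q + x^(q²)
  ---------------------------------------------------------------------------
  have hfrobK : ∀ k : K, k ^ (w+1) = k := by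
    intro k
    have := FiniteField.pow_card k
    rwa [hK] at this
  let φhom : F →ₐ[K] F :=
    { toFun := fun x => x ^ (w+1)
      map_one' := one_pow _
      map_mul' := fun x y => mul_pow x y _
      map_zero' := zero_pow (by omega)
      map_add' := fun x y => by
        rw [hq]
        exact add_pow_char_pow ..
      commutes' := fun k => by
        rw [← map_pow, hfrobK] }
  have hφbij : Function.Bijective φhom := by
    have hinj : Function.Injective φhom := φhom.toRingHom.injective
    exact Finite.injective_iff_bijective.mp hinj
  let φ : F ≃ₐ[K] F := AlgEquiv.ofBijective φhom hφbij
  have hφ : ∀ x : F, φ x = x ^ (w+1) := fun x => rfl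
  have hφ2 : ∀ x : F, (φ ^ 2) x = x ^ ((w+1)^2) := by
    intro x
    have : (φ ^ 2) x = φ (φ x) := by rw [pow_two]; rfl
    rw [this, hφ, hφ, ← pow_mul, ← pow_two]
  have hrank : Module.finrank K F = 3 := by
    have h := Module.card_eq_pow_finrank (K := K) (V := F)
    rw [hK, hF] at h
    exact (Nat.pow_right_injective hq2 h.symm)
  have hcardAut : Fintype.card (F ≃ₐ[K] F) = 3 := by
    rw [← Nat.card_eq_fintype_card, IsGalois.card_aut_eq_finrank, hrank]
  -- distinctness of 1, φ, φ^2
  have h9 : 9 ≤ (w+1)^2 := by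
    calc (9:ℕ) = 3^2 := by norm_num
    _ ≤ (w+1)^2 := Nat.pow_le_pow_left hq3 2
  have hcb : 3*(w+1)^2 ≤ (w+1)^3 := by
    calc 3*(w+1)^2 ≤ (w+1)*(w+1)^2 := Nat.mul_le_mul_right _ hq3
    _ = (w+1)^3 := by ring
  have hw1sq : (w+1) < (w+1)^2 := by
    have h := Nat.pow_lt_pow_right (a := w+1) (by omega) (by omega : 1 < 2)
    rwa [pow_one] at h
  have hb1 : (w+1) < (w+1)^3 - 1 := by omega
  have hb2 : (w+1)^2 < (w+1)^3 - 1 := by omega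
  have hωinj : ∀ m1 m2 : ℕ, m1 < (w+1)^3 - 1 → m2 < (w+1)^3 - 1 → ω ^ m1 = ω ^ m2 → m1 = m2 := by
    intro m1 m2 h1 h2 he
    have heu : (Units.mk0 ω hω0) ^ m1 = (Units.mk0 ω hω0) ^ m2 := by
      ext
      simpa using he
    have := pow_eq_pow_iff_modEq.mp heu
    rw [hmk] at this
    rwa [Nat.ModEq, Nat.mod_eq_of_lt h1, Nat.mod_eq_of_lt h2] at this
  have hne1 : (1 : F ≃ₐ[K] F) ≠ φ := by
    intro h
    have h' := DFunLike.congr_fun h ω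
    rw [AlgEquiv.one_apply, hφ] at h'
    have := hωinj 1 (w+1) (by omega) hb1 (by rw [pow_one]; exact h')
    omega
  have hne2 : (1 : F ≃ₐ[K] F) ≠ φ ^ 2 := by
    intro h
    have h' := DFunLike.congr_fun h ω
    rw [AlgEquiv.one_apply, hφ2] at h'
    have := hωinj 1 ((w+1)^2) (by omega) hb2 (by rw [pow_one]; exact h')
    omega
  have hne3 : φ ≠ φ ^ 2 := by
    intro h
    have h' := DFunLike.congr_fun h ω
    rw [hφ, hφ2] at h'
    have := hωinj (w+1) ((w+1)^2) hb1 hb2 h'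
    omega
  have huniv : (Finset.univ : Finset (F ≃ₐ[K] F)) = {1, φ, φ ^ 2} := by
    symm
    apply Finset.eq_univ_of_card
    rw [hcardAut]
    rw [Finset.card_insert_of_notMem (by simp [hne1, hne2]),
      Finset.card_insert_of_notMem (by simp [hne3]), Finset.card_singleton]
  have traceForm : ∀ x : F,
      algebraMap K F (Algebra.trace K F x) = x + x ^ (w+1) + x ^ ((w+1)^2) := by
    intro x
    rw [trace_eq_sum_automorphisms, huniv]
    rw [Finset.sum_insert (by simp [hne1, hne2]), Finset.sum_insert (by simp [hne3]),
      Finset.sum_singleton, AlgEquiv.one_apply, hφ, hφ2, add_assoc]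
  ---------------------------------------------------------------------------
  -- setting up the elements
  ---------------------------------------------------------------------------
  simp only [WQ, Set.mem_setOf_eq] at hu hℓuW
  set b := ω ^ (ℓu * N) with hbdef
  set z := ω ^ (ℓu * N * w) with hzdef
  set A := ω ^ (2 * u.val) with hAdef
  have hb0 : b ≠ 0 := pow_ne_zero _ hω0
  have hz0 : z ≠ 0 := pow_ne_zero _ hω0
  -- nonvanishing facts
  have hzqsq : (z ^ (w+1)) ^ 2 ≠ 1 := by
    intro h
    rw [hzdef, ← pow_mul, ← pow_mul] at h
    rw [hOdvd] at h
    have he : ℓu * N * w * ((w+1) * 2) = ℓu * N * w * (2 * (w+1)) := by ring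
    rw [he] at h
    exact hMnd h
  have hzqne1 : z ^ (w+1) ≠ 1 := fun h => hzqsq (by rw [h, one_pow])
  have hzqnen1 : z ^ (w+1) ≠ -1 := fun h => hzqsq (by rw [h]; ring)
  have hzqp1 : z ^ (w+1) + 1 ≠ 0 := by
    intro h
    exact hzqnen1 (by linear_combination h)
  have hz1 : z ≠ 1 := fun h => hzqne1 (by rw [h, one_pow])
  -- the quadratic character facts
  have hsq : ∀ x : F, x ≠ 0 → η x * η x = 1 := by
    intro x hx
    have h2 := pow_orderOf_eq_one η
    rw [hη] at h2
    have h3 : (η ^ 2) x = η x ^ 2 := MulChar.pow_apply' η (by norm_num) x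
    rw [h2] at h3
    have hxu : IsUnit x := isUnit_iff_ne_zero.mpr hx
    have h4 : (1 : MulChar F ℂ) x = 1 := by
      conv_lhs => rw [← hxu.unit_spec]
      exact MulChar.one_apply_coe hxu.unit
    rw [h4] at h3
    rw [← pow_two]
    exact h3.symm
  have hsqpow : ∀ m : ℕ, η (ω ^ (m * 2)) = 1 := by
    intro m
    rw [pow_mul, map_pow, pow_two]
    exact hsq _ (pow_ne_zero _ hω0)
  have hηz : η z = 1 := by
    rw [hzdef, show ℓu * N * w = (ℓu * N * w2) * 2 from by rw [hw2e]; ring]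
    exact hsqpow _
  have hηA : η A = 1 := by
    rw [hAdef, show 2 * u.val = u.val * 2 from by ring]
    exact hsqpow _
  have hηb2 : η b ^ 2 = 1 := by
    rw [pow_two]; exact hsq b hb0
  ---------------------------------------------------------------------------
  -- the two trace-zero relations
  ---------------------------------------------------------------------------
  have h1 : A + A ^ (w+1) + A ^ ((w+1)^2) = 0 := by
    have h := congrArg (algebraMap K F) hu
    rwa [map_zero, traceForm] at h
  haveI : NeZero ((w+1)^2 + (w+1) + 1) := ⟨by positivity⟩
  have hlN : ℓu * N < (w+1)^2 + (w+1) + 1 := by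
    calc ℓu * N ≤ (M-1) * N := Nat.mul_le_mul_right N hℓu2
    _ < M * N := by
      have : M - 1 < M := by omega
      exact (Nat.mul_lt_mul_right hNpos).mpr this
    _ = (w+1)^2 + (w+1) + 1 := by rw [mul_comm]; exact hNM
  have hval : ((ℓu * N : ℕ) : ZMod ((w+1)^2 + (w+1) + 1)).val = ℓu * N :=
    ZMod.val_natCast_of_lt hlN
  obtain ⟨t, ht⟩ : ∃ t, u.val + ℓu * N =
      ((w+1)^2 + (w+1) + 1) * t + (u + ((ℓu * N : ℕ) : ZMod ((w+1)^2 + (w+1) + 1))).val := by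
    refine ⟨(u.val + ℓu * N) / ((w+1)^2 + (w+1) + 1), ?_⟩
    rw [ZMod.val_add, hval]
    exact (Nat.div_add_mod _ _).symm
  set v' := (u + ((ℓu * N : ℕ) : ZMod ((w+1)^2 + (w+1) + 1))).val with hv'
  set s := ω ^ ((((w+1)^2 + (w+1) + 1)) * (2 * t)) with hsdef
  have hspow : s ^ w = 1 := by
    rw [hsdef, ← pow_mul, hOdvd]
    exact ⟨2 * t, by rw [← hq31]; ring⟩
  have hs : s ^ (w+1) = s := by rw [pow_succ, hspow, one_mul]
  have hsqq : s ^ ((w+1)^2) = s := by rw [pow_two, pow_mul, hs, hs]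
  have hXs : ω ^ (2 * v') * s = A * b ^ 2 := by
    rw [hsdef, ← pow_add, hAdef, hbdef, ← pow_mul, ← pow_add]
    congr 1
    calc 2 * v' + ((w+1)^2 + (w+1) + 1) * (2 * t)
        = 2 * (((w+1)^2 + (w+1) + 1) * t + v') := by ring
      _ = 2 * (u.val + ℓu * N) := by rw [← ht]
      _ = 2 * u.val + ℓu * N * 2 := by ring
  have htr : ω ^ (2 * v') + (ω ^ (2 * v')) ^ (w+1) + (ω ^ (2 * v')) ^ ((w+1)^2) = 0 := by
    have h := congrArg (algebraMap K F) hℓuW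
    rwa [map_zero, traceForm] at h
  have h2 : A * b ^ 2 + (A * b ^ 2) ^ (w+1) + (A * b ^ 2) ^ ((w+1)^2) = 0 := by
    rw [← hXs, mul_pow, mul_pow, hs, hsqq]
    linear_combination s * htr
  ---------------------------------------------------------------------------
  -- the main algebraic identity
  ---------------------------------------------------------------------------
  have hbq : b ^ (w+1) = b * z := by
    rw [hbdef, hzdef, ← pow_mul, ← pow_add]
    congr 1; ring
  have hbqq : b ^ ((w+1)^2) = b * z * z ^ (w+1) := by
    rw [pow_two, pow_mul, hbq, mul_pow, hbq]
  rw [pow_add ω (2 * u.val) (ℓu * N), ← hAdef, ← hbdef]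
  set T := algebraMap K F (Algebra.trace K F (A * b)) with hTdef
  have hT : T = A * b + A ^ (w+1) * (b * z) + A ^ ((w+1)^2) * (b * z * z ^ (w+1)) := by
    rw [hTdef, traceForm, mul_pow, mul_pow, hbq, hbqq]
  -- rewrite h2 in the same shape
  rw [mul_pow, mul_pow, pow_right_comm b 2, hbq, pow_right_comm b 2, hbqq] at h2
  have hstep : (T * b) * (z * (z ^ (w+1) + 1)) = A * b ^ 2 * (1 - z * z ^ (w+1)) * (z - 1) := by
    have hd : b ^ 2 * z * (z ^ (w+1) - 1) ≠ 0 :=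
      mul_ne_zero (mul_ne_zero (pow_ne_zero _ hb0) hz0) (sub_ne_zero.mpr hzqne1)
    refine mul_right_cancel₀ hd ?_
    rw [hT]
    generalize z ^ (w+1) = zq at h2 ⊢
    generalize A ^ ((w+1)^2) = Aqq at h1 h2 ⊢
    generalize A ^ (w+1) = Aq at h1 h2 ⊢
    linear_combination (b * ((b*z*zq) * ((b*z*zq)^2 - (b*z)^2) + ((b*z) - (b*z*zq)) * (b*z*zq)^2)) * h1
      + (- b * ((b*z) - (b*z*zq))) * h2
  ---------------------------------------------------------------------------
  -- rewriting the goal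
  ---------------------------------------------------------------------------
  have hgoalE1 : ω ^ (ℓu * ((w+1) + 1) * (((w+1)^3 - 1) / M)) = z * z ^ (w+1) := by
    rw [hkN, hzdef, ← pow_mul, ← pow_add]
    congr 1; ring
  have hgoalE2 : ω ^ (2 * ℓu * (w+1) * (((w+1)^3 - 1) / M)) = (z ^ (w+1)) ^ 2 := by
    rw [hkN, hzdef, ← pow_mul, ← pow_mul]
    congr 1; ring
  rw [hgoalE1, hgoalE2]
  -- final character computation
  have happ := congrArg (fun x : F => η x) hstep
  simp only [map_mul, map_pow] at happ
  rw [hηz, hηA, hηb2] at happ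
  have hzq1η := hsq (z ^ (w+1) + 1) hzqp1
  have hf1 : η (1 - (z ^ (w+1)) ^ 2) = η (z ^ (w+1) + 1) * η (1 - z ^ (w+1)) := by
    rw [show (1 : F) - (z ^ (w+1)) ^ 2 = (z ^ (w+1) + 1) * (1 - z ^ (w+1)) from by ring, map_mul]
  have hf2 : η (1 - z ^ (w+1)) = η (1 - z) := by
    have he : (1 : F) - z ^ (w+1) = (1 - z) ^ (w+1) := by
      rw [hq, sub_pow_char_pow, one_pow]
    rw [he, map_pow]
    have h2 := hsq (1 - z) (sub_ne_zero.mpr (Ne.symm hz1))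
    calc η (1 - z) ^ (w+1) = (η (1 - z) * η (1 - z)) ^ w2 * η (1 - z) := by
          rw [hw2e]; ring
      _ = η (1 - z) := by rw [h2, one_pow, one_mul]
  have hf3 : η (z - 1) = η (-1) * η (1 - z) := by
    rw [show z - 1 = -1 * (1 - z) from by ring, map_mul]
  rw [hf1, hf2, map_mul]
  linear_combination (η (z ^ (w+1) + 1)) * happ - (η T * η b) * hzq1η
    + (η (z ^ (w+1) + 1) * η (1 - z * z ^ (w+1))) * hf3
end

section
/- Let q ≡ 1 (mod 6) be a prime power, M = 3 and N = (q²+q+1)/3. For u ∈ W_Q with u mod N ∈ 2^{-1}I_1, with ℓ_u and g_3(ω^u) as defined, one has η(g_3(ω^u)) = 1 if q ≡ 1 (mod 12), and η(g_3(ω^u)) = −1 if q ≡ 7 (mod 12), where η is the quadratic character of F_{q³}. -/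
open scoped Classical Pointwise

set_option maxHeartbeats 1000000 in
/-- Let `q ≡ 1 (mod 6)` be a prime power, `M = 3`, `N = (q²+q+1)/3`.
For `u ∈ W_Q` with `u mod N ∈ 2⁻¹I₁` and `ℓ_u` as defined, with
`g₃(ω^u) := Tr_{q³/q}(ω^{2u+ℓ_uN})·ω^{ℓ_uN}`, one has `η(g₃(ω^u)) = 1` if
`q ≡ 1 (mod 12)` and `η(g₃(ω^u)) = -1` if `q ≡ 7 (mod 12)`, where `η` is the
quadratic character of `F_{q³}`. -/
theorem stmt17 (p n q N : ℕ) [Fact p.Prime] (hq : q = p ^ n) (hn : 0 < n)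
    (hq6 : q % 6 = 1) (hN : N = (q ^ 2 + q + 1) / 3)
    (K F : Type) [Field K] [Field F] [Fintype K] [Fintype F]
    [Algebra K F] [Algebra (ZMod p) F]
    (hK : Fintype.card K = q) (hF : Fintype.card F = q ^ 3)
    (ω : F) (hω : ∀ x : F, x ≠ 0 → ∃ k : ℕ, ω ^ k = x)
    (I₁ : Set (ZMod N))
    (hI₁ : I₁ = {i : ZMod N |
      psiSum (canonPsi p F) (cycClass ω N i.val) = -3 + 2 * (q : ℂ)})
    (u : ZMod (q ^ 2 + q + 1)) (hu : u ∈ WQ q K ω)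
    (huI : ((u.val : ZMod N)) ∈ (2 : ZMod N)⁻¹ • I₁)
    (ℓu : ℕ) (hℓu1 : 1 ≤ ℓu) (hℓu2 : ℓu ≤ 3 - 1)
    (hℓuW : u + ((ℓu * N : ℕ) : ZMod (q ^ 2 + q + 1)) ∈ WQ q K ω)
    (η : MulChar F ℂ) (hη : orderOf η = 2) :
    (q % 12 = 1 →
      η (algebraMap K F (Algebra.trace K F (ω ^ (2 * u.val + ℓu * N))) * ω ^ (ℓu * N))
        = 1) ∧
    (q % 12 = 7 →
      η (algebraMap K F (Algebra.trace K F (ω ^ (2 * u.val + ℓu * N))) * ω ^ (ℓu * N))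
        = -1) := by
  have hp : p.Prime := Fact.out
  have hq2 : 2 ≤ q := hq ▸ le_trans hp.two_le (Nat.le_self_pow hn.ne' p)
  have hq2mod : q % 2 = 1 := by omega
  have hq3mod : q % 3 = 1 := by omega
  have hp2 : p ≠ 2 := by
    rintro rfl
    have : 2 ∣ q := hq ▸ dvd_pow_self 2 hn.ne'
    omega
  have hp3 : p ≠ 3 := by
    rintro rfl
    have : 3 ∣ q := hq ▸ dvd_pow_self 3 hn.ne'
    omega
  obtain ⟨t, ht⟩ : ∃ t, q = 3 * t + 1 := ⟨q / 3, by omega⟩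
  obtain ⟨r, hr⟩ : ∃ r, q = r + 1 := ⟨q - 1, by omega⟩
  have hrt : r = 3 * t := by omega
  have h3N : 3 * N = q ^ 2 + q + 1 := by
    have hdvd : q ^ 2 + q + 1 = 3 * (3 * t ^ 2 + 3 * t + 1) := by subst ht; ring
    rw [hN, hdvd, Nat.mul_div_cancel_left _ (by norm_num)]
  have hNpos : 0 < N := by omega
  haveI : NeZero (q ^ 2 + q + 1) := ⟨by omega⟩
  have hD : (q ^ 2 + q + 1) * r = q ^ 3 - 1 := by
    have h1 : q ^ 3 = (q ^ 2 + q + 1) * r + 1 := by rw [hr]; ring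
    omega
  -- characteristic
  haveI hcharF : CharP F p := charP_of_injective_algebraMap (algebraMap (ZMod p) F).injective p
  have h3F : (3 : F) ≠ 0 := by
    intro h
    exact hp3 ((Nat.prime_dvd_prime_iff_eq hp Nat.prime_three).mp
      ((CharP.cast_eq_zero_iff F p 3).mp (by exact_mod_cast h)))
  have h2F : (2 : F) ≠ 0 := by
    intro h
    exact hp2 ((Nat.prime_dvd_prime_iff_eq hp Nat.prime_two).mp
      ((CharP.cast_eq_zero_iff F p 2).mp (by exact_mod_cast h)))
  -- ω is a primitive element
  have hω0 : ω ≠ 0 := by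
    intro hzero
    obtain ⟨k, hk⟩ := hω (-1) (by simp)
    rw [hzero] at hk
    rcases Nat.eq_zero_or_pos k with hk0 | hk0
    · rw [hk0, pow_zero] at hk
      exact h2F (by linear_combination hk)
    · rw [zero_pow hk0.ne'] at hk
      exact neg_ne_zero.mpr (one_ne_zero (α := F)) hk.symm
  set ωu : Fˣ := Units.mk0 ω hω0 with hωu
  have hgen : ∀ x : Fˣ, x ∈ Subgroup.zpowers ωu := by
    intro x
    obtain ⟨k, hk⟩ := hω x.val x.ne_zero
    have hku : ωu ^ k = x := Units.ext (by rw [Units.val_pow_eq_pow_val]; exact hk)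
    exact Subgroup.mem_zpowers_iff.mpr ⟨(k : ℤ), by rw [zpow_natCast]; exact hku⟩
  have horduu : orderOf ωu = q ^ 3 - 1 := by
    rw [orderOf_eq_card_of_forall_mem_zpowers hgen, Nat.card_eq_fintype_card,
      Fintype.card_units, hF]
  have hord : orderOf ω = q ^ 3 - 1 := (orderOf_units (y := ωu)).trans horduu
  have hpow1 : ∀ s : ℕ, (q ^ 3 - 1) ∣ s → ω ^ s = 1 := fun s hs =>
    orderOf_dvd_iff_pow_eq_one.mp (hord ▸ hs)
  have hMr1 : ω ^ ((q ^ 2 + q + 1) * r) = 1 := hpow1 _ (hD ▸ dvd_rfl)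
  have hc3 : ω ^ (3 * N * r) = 1 := by
    have h1 : 3 * N * r = (q ^ 2 + q + 1) * r := by rw [h3N]
    rw [h1]; exact hMr1
  have hpowiff : ∀ a b : ℕ, ω ^ a = ω ^ b ↔ a ≡ b [MOD q ^ 3 - 1] := by
    intro a b
    constructor
    · intro hab
      have : ωu ^ a = ωu ^ b := Units.ext (by
        rw [Units.val_pow_eq_pow_val, Units.val_pow_eq_pow_val]; exact hab)
      have h2 := pow_eq_pow_iff_modEq.mp this
      rwa [horduu] at h2
    · intro hab
      have h2 : ωu ^ a = ωu ^ b := pow_eq_pow_iff_modEq.mpr (by rwa [horduu])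
      calc ω ^ a = ((ωu ^ a : Fˣ) : F) := by rw [Units.val_pow_eq_pow_val]; rfl
        _ = ((ωu ^ b : Fˣ) : F) := by rw [h2]
        _ = ω ^ b := by rw [Units.val_pow_eq_pow_val]; rfl
  -- the Frobenius as an element of the Galois group
  have hcommutes : ∀ a : K, (iterateFrobenius F p n) (algebraMap K F a) = algebraMap K F a := by
    intro a
    have h1 : a ^ q = a := by rw [← hK]; exact FiniteField.pow_card a
    rw [iterateFrobenius_def, ← hq, ← map_pow, h1]
  let φA : F →ₐ[K] F := { (iterateFrobenius F p n : F →+* F) with commutes' := hcommutes }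
  have hφAbij : Function.Bijective φA :=
    Finite.injective_iff_bijective.mp φA.toRingHom.injective
  let φ : F ≃ₐ[K] F := AlgEquiv.ofBijective φA hφAbij
  have hφ : ∀ z : F, φ z = z ^ q := by
    intro z
    show (iterateFrobenius F p n) z = z ^ q
    rw [iterateFrobenius_def, hq]
  have hφ2 : ∀ z : F, (φ ^ 2) z = (z ^ q) ^ q := by
    intro z
    rw [pow_two, AlgEquiv.mul_apply, hφ, hφ]
  have hrank : Module.finrank K F = 3 := by
    have hc := Module.card_eq_pow_finrank (K := K) (V := F)
    rw [hK, hF] at hc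
    exact (Nat.pow_right_injective hq2 hc.symm)
  have hcard_aut : Fintype.card (F ≃ₐ[K] F) = 3 := by
    rw [← Nat.card_eq_fintype_card, IsGalois.card_aut_eq_finrank, hrank]
  have hqlt : q < q ^ 3 - 1 := by nlinarith [hq2]
  have hqqlt : q * q < q ^ 3 - 1 := by nlinarith [hq2]
  have h1lt : 1 < q ^ 3 - 1 := by nlinarith [hq2]
  have hωq : ω ^ q ≠ ω ^ 1 := by
    intro h
    have := (hpowiff q 1).mp h
    rw [Nat.ModEq, Nat.mod_eq_of_lt hqlt, Nat.mod_eq_of_lt h1lt] at this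
    omega
  have hωqq : ω ^ (q * q) ≠ ω ^ 1 := by
    intro h
    have := (hpowiff (q * q) 1).mp h
    rw [Nat.ModEq, Nat.mod_eq_of_lt hqqlt, Nat.mod_eq_of_lt h1lt] at this
    nlinarith [this, hq2]
  have hωqne : ω ^ q ≠ ω ^ (q * q) := by
    intro h
    have := (hpowiff q (q * q)).mp h
    rw [Nat.ModEq, Nat.mod_eq_of_lt hqlt, Nat.mod_eq_of_lt hqqlt] at this
    nlinarith [this, hq2]
  have hφ1 : φ ≠ 1 := by
    intro h
    apply hωq
    have := congrArg (fun σ : F ≃ₐ[K] F => σ ω) h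
    simpa [hφ, pow_one] using this
  have hφ21 : φ ^ 2 ≠ 1 := by
    intro h
    apply hωqq
    have := congrArg (fun σ : F ≃ₐ[K] F => σ ω) h
    simp only [hφ2, AlgEquiv.one_apply] at this
    rw [pow_mul, pow_one]
    exact this
  have hφφ2 : φ ≠ φ ^ 2 := by
    intro h
    apply hωqne
    have h2 := congrArg (fun σ : F ≃ₐ[K] F => σ ω) h
    simp only [hφ, hφ2] at h2
    rw [pow_mul]
    exact h2
  have huniv : (Finset.univ : Finset (F ≃ₐ[K] F)) = {1, φ, φ ^ 2} := by
    symm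
    apply Finset.eq_univ_of_card
    rw [hcard_aut]
    rw [Finset.card_insert_of_notMem (by
        simp only [Finset.mem_insert, Finset.mem_singleton]
        push_neg
        exact ⟨Ne.symm hφ1, Ne.symm hφ21⟩),
      Finset.card_insert_of_notMem (by simpa using hφφ2), Finset.card_singleton]
  have TrF : ∀ z : F, algebraMap K F (Algebra.trace K F z) = z + z ^ q + (z ^ q) ^ q := by
    intro z
    rw [trace_eq_sum_automorphisms, huniv]
    rw [Finset.sum_insert (by
        simp only [Finset.mem_insert, Finset.mem_singleton]
        push_neg
        exact ⟨Ne.symm hφ1, Ne.symm hφ21⟩),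
      Finset.sum_insert (by simpa using hφφ2), Finset.sum_singleton]
    rw [AlgEquiv.one_apply, hφ, hφ2]
    ring
  -- the trace conditions
  have hu' : Algebra.trace K F (ω ^ (2 * u.val)) = 0 := hu
  have E1 : ω ^ (2 * u.val) + (ω ^ (2 * u.val)) ^ q + ((ω ^ (2 * u.val)) ^ q) ^ q = 0 := by
    have h1 := congrArg (algebraMap K F) hu'
    rwa [map_zero, TrF] at h1
  have hv' : Algebra.trace K F
      (ω ^ (2 * (u + ((ℓu * N : ℕ) : ZMod (q ^ 2 + q + 1))).val)) = 0 := hℓuW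
  have hE2 : ω ^ (2 * (u + ((ℓu * N : ℕ) : ZMod (q ^ 2 + q + 1))).val)
      + (ω ^ (2 * (u + ((ℓu * N : ℕ) : ZMod (q ^ 2 + q + 1))).val)) ^ q
      + ((ω ^ (2 * (u + ((ℓu * N : ℕ) : ZMod (q ^ 2 + q + 1))).val)) ^ q) ^ q = 0 := by
    have h1 := congrArg (algebraMap K F) hv'
    rwa [map_zero, TrF] at h1
  set v : ℕ := (u + ((ℓu * N : ℕ) : ZMod (q ^ 2 + q + 1))).val with hvdef
  have hval : v = (u.val + ℓu * N) % (q ^ 2 + q + 1) := by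
    rw [hvdef]
    have h1 : u + ((ℓu * N : ℕ) : ZMod (q ^ 2 + q + 1))
        = (((u.val + ℓu * N : ℕ)) : ZMod (q ^ 2 + q + 1)) := by
      rw [Nat.cast_add, ZMod.natCast_val, ZMod.cast_id]
    rw [h1, ZMod.val_natCast]
  set j : ℕ := (u.val + ℓu * N) / (q ^ 2 + q + 1) with hj
  have hsplit : u.val + ℓu * N = v + (q ^ 2 + q + 1) * j := by
    rw [hval, hj]
    exact (Nat.mod_add_div _ _).symm
  have hfix : ∀ a : ℕ, (ω ^ ((q ^ 2 + q + 1) * a)) ^ q = ω ^ ((q ^ 2 + q + 1) * a) := by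
    intro a
    rw [← pow_mul]
    have h1 : (q ^ 2 + q + 1) * a * q = ((q ^ 2 + q + 1) * r) * a + (q ^ 2 + q + 1) * a := by
      rw [hr]; ring
    rw [h1, pow_add, pow_mul, hMr1, one_pow, one_mul]
  -- ξ, the primitive cube root of unity
  set ξ : F := ω ^ (ℓu * N * r) with hξdef
  have hξ3 : ξ ^ 3 = 1 := by
    rw [hξdef, ← pow_mul]
    have h1 : ℓu * N * r * 3 = 3 * N * r * ℓu := by ring
    rw [h1, pow_mul, hc3, one_pow]
  have hξq : ξ ^ q = ξ := by
    rw [hξdef, ← pow_mul]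
    have h1 : ℓu * N * r * q = 3 * N * r * (ℓu * t) + ℓu * N * r := by
      rw [hr, hrt]; ring
    rw [h1, pow_add, pow_mul, hc3, one_pow, one_mul]
  have hξne1 : ξ ≠ 1 := by
    intro h
    have hdvd : (q ^ 3 - 1) ∣ (ℓu * N * r) := by
      rw [← hord]
      exact orderOf_dvd_of_pow_eq_one (by rw [← hξdef]; exact h)
    have hle : q ^ 3 - 1 ≤ ℓu * N * r :=
      Nat.le_of_dvd (Nat.mul_pos (Nat.mul_pos (by omega) hNpos) (by omega)) hdvd
    have h2 : ℓu * N * r ≤ 2 * (N * r) := by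
      calc ℓu * N * r = ℓu * (N * r) := by ring
        _ ≤ 2 * (N * r) := Nat.mul_le_mul_right _ (by omega)
    have h3 : q ^ 3 - 1 = 3 * (N * r) := by rw [← hD, ← h3N]; ring
    have h4 : 0 < N * r := Nat.mul_pos hNpos (by omega)
    omega
  have hcq : (ω ^ (ℓu * N)) ^ q = ξ * ω ^ (ℓu * N) := by
    rw [← pow_mul]
    have h1 : ℓu * N * q = ℓu * N * r + ℓu * N := by rw [hr]; ring
    rw [h1, pow_add, ← hξdef]
  -- transform the second trace condition
  have hxc2 : ω ^ (2 * u.val + 2 * (ℓu * N))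
      = ω ^ (2 * v) * ω ^ ((q ^ 2 + q + 1) * (2 * j)) := by
    rw [← pow_add]
    congr 1
    have h1 : (q ^ 2 + q + 1) * (2 * j) = 2 * ((q ^ 2 + q + 1) * j) := by ring
    omega
  have hG2' : ω ^ (2 * u.val + 2 * (ℓu * N))
      + (ω ^ (2 * u.val + 2 * (ℓu * N))) ^ q
      + ((ω ^ (2 * u.val + 2 * (ℓu * N))) ^ q) ^ q = 0 := by
    rw [hxc2, mul_pow, hfix, mul_pow, hfix]
    linear_combination (ω ^ ((q ^ 2 + q + 1) * (2 * j))) * hE2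
  have hxc : ω ^ (2 * u.val + 2 * (ℓu * N)) = ω ^ (2 * u.val) * (ω ^ (ℓu * N)) ^ 2 := by
    rw [← pow_mul, ← pow_add]
    congr 1
    ring
  have hcg : ((ω ^ (ℓu * N)) ^ 2) ^ q = ξ ^ 2 * (ω ^ (ℓu * N)) ^ 2 := by
    rw [pow_right_comm, hcq, mul_pow]
  have hξ2q : (ξ ^ 2) ^ q = ξ ^ 2 := by rw [pow_right_comm, hξq]
  have hG2 : ω ^ (2 * u.val) + ξ ^ 2 * (ω ^ (2 * u.val)) ^ q
      + ξ ^ 4 * ((ω ^ (2 * u.val)) ^ q) ^ q = 0 := by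
    have h := hG2'
    rw [hxc, mul_pow, hcg, mul_pow, mul_pow, hξ2q, hcg] at h
    have hc2ne : ((ω ^ (ℓu * N)) ^ 2) ≠ 0 := pow_ne_zero _ (pow_ne_zero _ hω0)
    have h2 : (ω ^ (2 * u.val) + ξ ^ 2 * (ω ^ (2 * u.val)) ^ q
        + ξ ^ 4 * ((ω ^ (2 * u.val)) ^ q) ^ q) * ((ω ^ (ℓu * N)) ^ 2) = 0 := by
      linear_combination h
    rcases mul_eq_zero.mp h2 with h' | h'
    · exact h'
    · exact absurd h' hc2ne
  -- solve the linear system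
  have hxA : ω ^ (2 * u.val) = ξ * (ω ^ (2 * u.val)) ^ q := by
    have hkey : (1 - ξ) * (ω ^ (2 * u.val) - ξ * (ω ^ (2 * u.val)) ^ q) = 0 := by
      linear_combination hG2 - ξ * E1 - ξ * (((ω ^ (2 * u.val)) ^ q) ^ q) * hξ3
    rcases mul_eq_zero.mp hkey with h | h
    · exact absurd (sub_eq_zero.mp h).symm hξne1
    · exact sub_eq_zero.mp h
  have hAx : (ω ^ (2 * u.val)) ^ q = ξ ^ 2 * ω ^ (2 * u.val) := by
    calc (ω ^ (2 * u.val)) ^ q = ξ ^ 3 * (ω ^ (2 * u.val)) ^ q := by rw [hξ3, one_mul]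
      _ = ξ ^ 2 * (ξ * (ω ^ (2 * u.val)) ^ q) := by ring
      _ = ξ ^ 2 * ω ^ (2 * u.val) := by rw [← hxA]
  -- the trace of ω^(2u+ℓN) equals 3·ω^(2u+ℓN)
  have hz1 : ω ^ (2 * u.val + ℓu * N) = ω ^ (2 * u.val) * ω ^ (ℓu * N) := pow_add ω _ _
  have hzfix : (ω ^ (2 * u.val + ℓu * N)) ^ q = ω ^ (2 * u.val + ℓu * N) := by
    rw [hz1, mul_pow, hcq, hAx]
    have h1 : ξ ^ 2 * ω ^ (2 * u.val) * (ξ * ω ^ (ℓu * N))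
        = ξ ^ 3 * (ω ^ (2 * u.val) * ω ^ (ℓu * N)) := by ring
    rw [h1, hξ3, one_mul]
  have hTr3 : algebraMap K F (Algebra.trace K F (ω ^ (2 * u.val + ℓu * N)))
      = 3 * ω ^ (2 * u.val + ℓu * N) := by
    rw [TrF, hzfix, hzfix]
    ring
  have harg : algebraMap K F (Algebra.trace K F (ω ^ (2 * u.val + ℓu * N))) * ω ^ (ℓu * N)
      = 3 * (ω ^ (u.val + ℓu * N)) ^ 2 := by
    rw [hTr3, mul_assoc]
    congr 1
    rw [← pow_add, ← pow_mul]
    congr 1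
    ring
  -- properties of η
  have hηsq : ∀ z : F, z ≠ 0 → η z * η z = 1 := by
    intro z hz
    have h2 : η ^ 2 = 1 := by rw [← hη]; exact pow_orderOf_eq_one η
    have h3' := MulChar.pow_apply' η (by norm_num : (2 : ℕ) ≠ 0) z
    rw [h2, MulChar.one_apply (isUnit_iff_ne_zero.mpr hz)] at h3'
    rw [← pow_two]
    exact h3'.symm
  have hηω : η ω = -1 := by
    rcases mul_self_eq_one_iff.mp (hηsq ω hω0) with h1 | h1
    · exfalso
      have hη1 : η = 1 := by
        apply MulChar.ext
        intro a
        obtain ⟨k, hk⟩ := hω a.val a.ne_zero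
        rw [MulChar.one_apply_coe, ← hk, map_pow, h1, one_pow]
      rw [hη1, orderOf_one] at hη
      exact absurd hη (by norm_num)
    · exact h1
  have hηval : η (algebraMap K F (Algebra.trace K F (ω ^ (2 * u.val + ℓu * N)))
      * ω ^ (ℓu * N)) = η 3 := by
    rw [harg, map_mul, map_pow]
    have h1 : η (ω ^ (u.val + ℓu * N)) ^ 2 = 1 := by
      rw [pow_two]
      exact hηsq _ (pow_ne_zero _ hω0)
    rw [map_pow] at h1 ⊢
    rw [h1, mul_one]
  -- η 3 is determined by whether 3 is a square in F
  obtain ⟨k3, hk3⟩ := hω 3 h3F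
  have hη3 : η (3 : F) = (-1 : ℂ) ^ k3 := by rw [← hk3, map_pow, hηω]
  have hQeven : 2 ∣ (q ^ 3 - 1) := by
    have h1 : q ^ 3 % 2 = 1 := by rw [Nat.pow_mod, hq2mod]
    omega
  have heven : IsSquare (3 : F) ↔ Even k3 := by
    constructor
    · rintro ⟨b, hb⟩
      have hbne : b ≠ 0 := by rintro rfl; rw [mul_zero] at hb; exact h3F hb
      obtain ⟨jb, hjb⟩ := hω b hbne
      have h1 : ω ^ k3 = ω ^ (jb + jb) := by rw [pow_add, hjb, ← hb, hk3]
      have hmod := (hpowiff _ _).mp h1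
      have h2 := Nat.ModEq.of_dvd hQeven hmod
      have h3 : k3 % 2 = (jb + jb) % 2 := h2
      rw [Nat.even_iff]
      omega
    · rintro ⟨tt, htt⟩
      exact ⟨ω ^ tt, by rw [← hk3, htt, pow_add]⟩
  -- quadratic residuosity of 3 in F
  have hringchar : ringChar F = p := ringChar.eq F p
  have hrc2 : ringChar F ≠ 2 := by rw [hringchar]; exact hp2
  haveI : Fact (Nat.Prime 3) := ⟨by norm_num⟩
  have hiff := FiniteField.isSquare_odd_prime_iff (F := F) hrc2 (p := 3) (by norm_num)
  rw [hF] at hiff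
  have hcast3 : ((3 : ℕ) : F) = (3 : F) := by norm_num
  rw [hcast3] at hiff
  have hq3mod3 : q ^ 3 % 3 = 1 := by rw [Nat.pow_mod, hq3mod]
  have hq3cast : ((q ^ 3 : ℕ) : ZMod 3) = 1 := by
    rw [← ZMod.natCast_mod, hq3mod3]
    norm_num
  constructor
  · -- q ≡ 1 (mod 12)
    intro h12
    have hq4 : q % 4 = 1 := by omega
    have hq34 : q ^ 3 % 4 = 1 := by rw [Nat.pow_mod, hq4]
    have hχ4 : ZMod.χ₄ ((q ^ 3 : ℕ) : ZMod 4) = 1 := ZMod.χ₄_nat_one_mod_four hq34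
    have hsq3 : IsSquare (3 : F) := by
      apply hiff.mpr
      rw [hχ4, hq3cast]
      norm_num
    have hev : Even k3 := heven.mp hsq3
    rw [hηval, hη3, hev.neg_one_pow]
  · -- q ≡ 7 (mod 12)
    intro h12
    have hq4 : q % 4 = 3 := by omega
    have hq34 : q ^ 3 % 4 = 3 := by rw [Nat.pow_mod, hq4]
    have hχ4 : ZMod.χ₄ ((q ^ 3 : ℕ) : ZMod 4) = -1 := ZMod.χ₄_nat_three_mod_four hq34
    have hnsq3 : ¬ IsSquare (3 : F) := by
      intro hsq
      have h1 := hiff.mp hsq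
      rw [hχ4, hq3cast] at h1
      apply h1
      have h2 : ((-1 : ℤ) : ZMod 3) * 1 = (-1 : ZMod 3) := by norm_num
      rw [h2]
      have hm1 : ¬ IsSquare (-1 : ZMod 3) := fun hc =>
        (ZMod.exists_sq_eq_neg_one_iff.mp hc) (by norm_num)
      exact quadraticChar_neg_one_iff_not_isSquare.mpr hm1
    have hodd : Odd k3 := Nat.odd_iff.mpr (by
      rcases Nat.even_or_odd k3 with he | ho
      · exact absurd (heven.mpr he) hnsq3
      · exact Nat.odd_iff.mp ho)
    rw [hηval, hη3, hodd.neg_one_pow]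
end
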